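/- arXiv:1904.09653 — 10 statements merged into one kernel-verified Lean document; each statement's English description precedes it below -/
import Mathlib

section
/- For every x ∈ X, the value Φ x is the greatest element (IsGreatest) of the set { Ψ x μ : μ ∈ (Fin N → Fin m → ℂ) }; in particular the maximum over μ is attained at μ n = (B n x)⁻¹ *ᵥ (a n x) and equals Φ x. -/
open Matrix ComplexConjugate
open scoped ComplexOrder

private lemma herm_re_swap {m : ℕ} {M : Matrix (Fin m) (Fin m) ℂ}
    (hM : M.IsHermitian) (u v : Fin m → ℂ) :
    (star u ⬝ᵥ (M *ᵥ v)).re = (star v ⬝ᵥ (M *ᵥ u)).re := by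
  have : star u ⬝ᵥ (M *ᵥ v) = star (star (M *ᵥ v) ⬝ᵥ u) := star_dotProduct _ _
  rw [this, star_mulVec, hM.eq, ← Matrix.dotProduct_mulVec]
  simp [Complex.star_def]

private lemma key_eq {m : ℕ} {B : Matrix (Fin m) (Fin m) ℂ} (hB : B.PosDef)
    (a : Fin m → ℂ) :
    2 * (star (B⁻¹ *ᵥ a) ⬝ᵥ a).re - (star (B⁻¹ *ᵥ a) ⬝ᵥ (B *ᵥ (B⁻¹ *ᵥ a))).re
      = (star a ⬝ᵥ (B⁻¹ *ᵥ a)).re := by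
  have hdet : IsUnit B.det := (Matrix.isUnit_iff_isUnit_det B).mp hB.isUnit
  have hBw : B *ᵥ (B⁻¹ *ᵥ a) = a := by
    rw [Matrix.mulVec_mulVec, Matrix.mul_nonsing_inv _ hdet, Matrix.one_mulVec]
  have hsw : (star (B⁻¹ *ᵥ a) ⬝ᵥ a).re = (star a ⬝ᵥ (B⁻¹ *ᵥ a)).re := by
    rw [star_dotProduct]
    simp [Complex.star_def]
  rw [hBw, hsw]; ring

private lemma key_ineq {m : ℕ} {B : Matrix (Fin m) (Fin m) ℂ} (hB : B.PosDef)
    (a μ : Fin m → ℂ) :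
    2 * (star μ ⬝ᵥ a).re - (star μ ⬝ᵥ (B *ᵥ μ)).re ≤ (star a ⬝ᵥ (B⁻¹ *ᵥ a)).re := by
  classical
  have hdet : IsUnit B.det := (Matrix.isUnit_iff_isUnit_det B).mp hB.isUnit
  set w : Fin m → ℂ := B⁻¹ *ᵥ a with hw
  have hBw : B *ᵥ w = a := by
    rw [hw, Matrix.mulVec_mulVec, Matrix.mul_nonsing_inv _ hdet, Matrix.one_mulVec]
  have hpos : 0 ≤ (star (μ - w) ⬝ᵥ (B *ᵥ (μ - w))).re :=
    hB.posSemidef.re_dotProduct_nonneg (μ - w)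
  have hexp : (star (μ - w) ⬝ᵥ (B *ᵥ (μ - w))).re
      = (star μ ⬝ᵥ (B *ᵥ μ)).re - 2 * (star μ ⬝ᵥ a).re + (star a ⬝ᵥ (B⁻¹ *ᵥ a)).re := by
    have h1 : star (μ - w) = star μ - star w := by simp [star_sub]
    rw [h1, Matrix.mulVec_sub, sub_dotProduct, dotProduct_sub,
      dotProduct_sub, hBw]
    have h2 : (star w ⬝ᵥ (B *ᵥ μ)).re = (star μ ⬝ᵥ a).re := by
      rw [herm_re_swap hB.1 w μ, hBw]
    have h3 : (star w ⬝ᵥ a).re = (star a ⬝ᵥ (B⁻¹ *ᵥ a)).re := by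
      rw [star_dotProduct]
      simp [hw, Complex.star_def]
    simp only [Complex.sub_re]
    rw [h2, h3]; ring
  linarith

/-- Quadratic transform: for every `x ∈ X`, the original sum-of-functions-of-ratio
objective `Φ x` is the greatest element of the set of values of the reformulated
objective `Ψ x μ` over all auxiliary variables `μ`; the maximum is attained at
`μ n = (B n x)⁻¹ *ᵥ (a n x)` and equals `Φ x`. -/
theorem quadratic_transform_isGreatest (m N : ℕ) (hm : 0 < m) (hN : 0 < N)
    {α : Type*} (X : Set α) (hX : X.Nonempty)
    (a : Fin N → α → (Fin m → ℂ))
    (B : Fin N → α → Matrix (Fin m) (Fin m) ℂ)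
    (hB : ∀ x ∈ X, ∀ n : Fin N, (B n x).IsHermitian ∧ (B n x).PosDef)
    (f : Fin N → ℝ → ℝ) (hf : ∀ n : Fin N, Monotone (f n))
    (Φ : α → ℝ)
    (hΦ : ∀ x : α, Φ x = ∑ n : Fin N,
      f n ((star (a n x) ⬝ᵥ ((B n x)⁻¹ *ᵥ (a n x))).re))
    (Ψ : α → (Fin N → Fin m → ℂ) → ℝ)
    (hΨ : ∀ (x : α) (μ : Fin N → Fin m → ℂ), Ψ x μ = ∑ n : Fin N,
      f n (2 * (star (μ n) ⬝ᵥ (a n x)).re - (star (μ n) ⬝ᵥ ((B n x) *ᵥ (μ n))).re))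
    (x : α) (hx : x ∈ X) :
    IsGreatest {y : ℝ | ∃ μ : Fin N → Fin m → ℂ, y = Ψ x μ} (Φ x) ∧
    Ψ x (fun n => (B n x)⁻¹ *ᵥ (a n x)) = Φ x := by
  have heq : Ψ x (fun n => (B n x)⁻¹ *ᵥ (a n x)) = Φ x := by
    rw [hΨ, hΦ]
    refine Finset.sum_congr rfl fun n _ => ?_
    congr 1
    exact key_eq (hB x hx n).2 (a n x)
  refine ⟨⟨⟨fun n => (B n x)⁻¹ *ᵥ (a n x), heq.symm⟩, ?_⟩, heq⟩
  rintro y ⟨μ, rfl⟩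
  rw [hΨ, hΦ]
  exact Finset.sum_le_sum fun n _ => hf n (key_ineq (hB x hx n).2 (a n x) (μ n))
end

section
/- Let m1, m2 be positive naturals, let B be an m1×m1 complex Hermitian positive definite matrix, and let A be an m1×m2 complex matrix. Then for every m1×m2 complex matrix Λ, the m2×m2 matrix Aᴴ * B⁻¹ * A − (Aᴴ * Λ + Λᴴ * A − Λᴴ * B * Λ) is positive semidefinite, and it equals the zero matrix if and only if Λ = B⁻¹ * A. -/
open Matrix ComplexConjugate
open scoped ComplexOrder

/-- Matrix quadratic-completion: for an `m1 × m1` Hermitian positive definite `B`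
and an `m1 × m2` matrix `A`, for every `m1 × m2` matrix `Λ`, the `m2 × m2` matrix
`Aᴴ B⁻¹ A − (Aᴴ Λ + Λᴴ A − Λᴴ B Λ)` is positive semidefinite, and it is zero iff
`Λ = B⁻¹ A`. -/
theorem matrix_quadratic_completion (m1 m2 : ℕ) (hm1 : 0 < m1) (hm2 : 0 < m2)
    (B : Matrix (Fin m1) (Fin m1) ℂ) (hB : B.PosDef)
    (A : Matrix (Fin m1) (Fin m2) ℂ) (Λ : Matrix (Fin m1) (Fin m2) ℂ) :
    (Aᴴ * B⁻¹ * A - (Aᴴ * Λ + Λᴴ * A - Λᴴ * B * Λ)).PosSemidef ∧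
    (Aᴴ * B⁻¹ * A - (Aᴴ * Λ + Λᴴ * A - Λᴴ * B * Λ) = 0 ↔ Λ = B⁻¹ * A) := by
  have hdet : IsUnit B.det := hB.det_pos.ne'.isUnit
  have hBinvH : B⁻¹ᴴ = B⁻¹ := by
    rw [conjTranspose_nonsing_inv, hB.isHermitian.eq]
  set D := Λ - B⁻¹ * A with hD
  have key : Aᴴ * B⁻¹ * A - (Aᴴ * Λ + Λᴴ * A - Λᴴ * B * Λ) = Dᴴ * B * D := by
    rw [hD]
    simp only [conjTranspose_sub, conjTranspose_mul, hBinvH, Matrix.sub_mul, Matrix.mul_sub,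
      Matrix.mul_assoc, Matrix.mul_nonsing_inv_cancel_left _ _ hdet,
      Matrix.nonsing_inv_mul_cancel_left _ _ hdet]
    abel
  rw [key]
  refine ⟨hB.posSemidef.conjTranspose_mul_mul_same D, ?_, fun h => by simp [h, hD]⟩
  intro h
  have hD0 : D = 0 := by
    ext i j
    by_contra hij
    have hcol : (fun k => D k j) ≠ 0 := by
      intro hc
      exact hij (by simpa using congrFun hc i)
    have hq := hB.dotProduct_mulVec_pos hcol
    have : star (fun k => D k j) ⬝ᵥ B *ᵥ (fun k => D k j) = (Dᴴ * B * D) j j := by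
      simp [Matrix.mul_apply, Matrix.mulVec, dotProduct, Matrix.conjTranspose_apply,
        Finset.mul_sum, Finset.sum_mul, mul_assoc]
      rw [Finset.sum_comm]
    rw [this, h] at hq
    simp at hq
  have : Λ - B⁻¹ * A = 0 := hD0
  linear_combination (norm := noncomm_ring) this
end

section
/- For every x ∈ X, the value Φ x is the greatest element (IsGreatest) of the set { Ψ x Λ : Λ ∈ (Fin N → Matrix (Fin m1) (Fin m2) ℂ) }; in particular the maximum over Λ is attained at Λ n = (B n x)⁻¹ * (A n x) and equals Φ x. -/
open Matrix ComplexConjugate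
open scoped ComplexOrder

/-- Matrix quadratic transform: for every `x ∈ X`, the original objective `Φ x`
is the greatest element of the set of values of the reformulated objective
`Ψ x Λ` over all auxiliary matrix variables `Λ`; the maximum is attained at
`Λ n = (B n x)⁻¹ * (A n x)` and equals `Φ x`. -/
theorem matrix_quadratic_transform_isGreatest (m1 m2 N : ℕ)
    (hm1 : 0 < m1) (hm2 : 0 < m2) (hN : 0 < N)
    {α : Type*} (X : Set α) (hX : X.Nonempty)
    (A : Fin N → α → Matrix (Fin m1) (Fin m2) ℂ)
    (B : Fin N → α → Matrix (Fin m1) (Fin m1) ℂ)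
    (hB : ∀ x ∈ X, ∀ n : Fin N, (B n x).IsHermitian ∧ (B n x).PosDef)
    (F : Fin N → Matrix (Fin m2) (Fin m2) ℂ → ℝ)
    (hF : ∀ n : Fin N, ∀ C C' : Matrix (Fin m2) (Fin m2) ℂ,
      (C - C').PosSemidef → F n C' ≤ F n C)
    (Φ : α → ℝ)
    (hΦ : ∀ x : α, Φ x = ∑ n : Fin N, F n ((A n x)ᴴ * (B n x)⁻¹ * (A n x)))
    (Ψ : α → (Fin N → Matrix (Fin m1) (Fin m2) ℂ) → ℝ)
    (hΨ : ∀ (x : α) (Λ : Fin N → Matrix (Fin m1) (Fin m2) ℂ), Ψ x Λ = ∑ n : Fin N,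
      F n ((A n x)ᴴ * (Λ n) + (Λ n)ᴴ * (A n x) - (Λ n)ᴴ * (B n x) * (Λ n)))
    (x : α) (hx : x ∈ X) :
    IsGreatest {y : ℝ | ∃ Λ : Fin N → Matrix (Fin m1) (Fin m2) ℂ, y = Ψ x Λ} (Φ x) ∧
    Ψ x (fun n => (B n x)⁻¹ * (A n x)) = Φ x := by
  have hBpd : ∀ n, (B n x).PosDef := fun n => (hB x hx n).2
  have hinvH : ∀ n, ((B n x)⁻¹).IsHermitian := fun n => (hBpd n).inv.isHermitian
  have hmul : ∀ n, (B n x) * (B n x)⁻¹ = 1 := fun n =>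
    mul_nonsing_inv _ ((Matrix.isUnit_iff_isUnit_det _).1 (hBpd n).isUnit)
  have key : ∀ (Λ : Fin N → Matrix (Fin m1) (Fin m2) ℂ) (n : Fin N),
      (A n x)ᴴ * (B n x)⁻¹ * (A n x)
        - ((A n x)ᴴ * (Λ n) + (Λ n)ᴴ * (A n x) - (Λ n)ᴴ * (B n x) * (Λ n))
      = (Λ n - (B n x)⁻¹ * (A n x))ᴴ * (B n x) * (Λ n - (B n x)⁻¹ * (A n x)) := by
    intro Λ n
    have h1 : (B n x) * ((B n x)⁻¹ * (A n x)) = A n x := by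
      rw [← Matrix.mul_assoc, hmul n, Matrix.one_mul]
    have h2 : ((B n x)⁻¹ * (A n x))ᴴ = (A n x)ᴴ * (B n x)⁻¹ := by
      rw [conjTranspose_mul, (hinvH n).eq]
    rw [conjTranspose_sub, h2]
    simp only [Matrix.sub_mul, Matrix.mul_sub, Matrix.mul_assoc, h1]
    have h3 : ∀ M : Matrix (Fin m1) (Fin m2) ℂ, (B n x)⁻¹ * ((B n x) * M) = M := by
      intro M
      rw [← Matrix.mul_assoc, nonsing_inv_mul _ ((Matrix.isUnit_iff_isUnit_det _).1 (hBpd n).isUnit), Matrix.one_mul]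
    simp only [h3]
    abel
  have hattain : Ψ x (fun n => (B n x)⁻¹ * (A n x)) = Φ x := by
    rw [hΨ, hΦ]
    refine Finset.sum_congr rfl fun n _ => ?_
    have h := key (fun n => (B n x)⁻¹ * (A n x)) n
    simp only [sub_self, Matrix.zero_mul, conjTranspose_zero, Matrix.mul_zero] at h
    rw [sub_eq_zero] at h
    rw [← h]
  refine ⟨⟨⟨fun n => (B n x)⁻¹ * (A n x), hattain.symm⟩, ?_⟩, hattain⟩
  rintro y ⟨Λ, rfl⟩
  rw [hΨ, hΦ]
  refine Finset.sum_le_sum fun n _ => ?_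
  refine hF n _ _ ?_
  rw [key Λ n]
  exact (hBpd n).posSemidef.conjTranspose_mul_mul_same _
end

section
/- Assume β l i j ≥ 0 for all l, i, j, α l k > 0 for all l, k, and σ² > 0. Fix a pilot configuration φ and define μ* by μ* l k = (β l l k) • ((D l φ)⁻¹ *ᵥ (φ l k)). Then for every μ : Fin L → Fin K → (Fin τ → ℂ), f φ μ ≤ f φ μ*, with equality if and only if μ = μ*. (The optimal update of the auxiliary variable in the quadratic transform is μ_{lk} = β_{llk} D_l⁻¹ φ_{lk}, and it is the unique maximizer.) -/
open Matrix ComplexConjugate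
open scoped ComplexOrder

/-- For a Hermitian matrix, the sesquilinear form satisfies conjugate symmetry. -/
lemma pilot_herm_dot {n : ℕ} {M : Matrix (Fin n) (Fin n) ℂ} (hM : M.IsHermitian)
    (u v : Fin n → ℂ) : star u ⬝ᵥ M *ᵥ v = conj (star v ⬝ᵥ M *ᵥ u) := by
  have h := hM.apply
  simp only [dotProduct, mulVec, Pi.star_apply, map_sum, Finset.mul_sum, Finset.sum_mul]
  rw [Finset.sum_comm]
  refine Finset.sum_congr rfl fun s _ => Finset.sum_congr rfl fun t _ => ?_
  rw [← h s t]
  simp only [_root_.map_mul, Complex.conj_conj, RCLike.star_def]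
  ring

/-- The pilot covariance matrix is positive definite. -/
lemma pilot_cov_posDef {n L K : ℕ} (σ2 : ℝ) (hσ2 : 0 < σ2) (β : Fin L → Fin K → ℝ)
    (hβ : ∀ i j, 0 ≤ β i j) (φ : Fin L → Fin K → (Fin n → ℂ))
    (M : Matrix (Fin n) (Fin n) ℂ)
    (hM : ∀ s t, M s t = (σ2 : ℂ) * (if s = t then 1 else 0) +
      ∑ i : Fin L, ∑ j : Fin K, (β i j : ℂ) * (φ i j s) * conj (φ i j t)) :
    M.PosDef := by
  refine posDef_iff_dotProduct_mulVec.mpr ⟨?_, ?_⟩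
  · ext s t
    simp only [conjTranspose_apply, hM, RCLike.star_def, map_add, _root_.map_mul, map_sum,
      Complex.conj_conj, Complex.conj_ofReal]
    congr 1
    · simp [eq_comm]
    · exact Finset.sum_congr rfl fun i _ => Finset.sum_congr rfl fun j _ => by ring
  · intro x hx
    set c : Fin L → Fin K → ℂ := fun i j => ∑ s, conj (x s) * φ i j s with hc
    have hrow : ∀ s, (M *ᵥ x) s =
        (σ2 : ℂ) * x s + ∑ i, ∑ j, (β i j : ℂ) * φ i j s * conj (c i j) := by
      intro s
      simp only [mulVec, dotProduct, hM, add_mul, Finset.sum_add_distrib, Finset.sum_mul,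
        ite_mul, one_mul, zero_mul, mul_ite, mul_zero, hc, map_sum, _root_.map_mul,
        Complex.conj_conj]
      congr 1
      · simp
      · rw [Finset.sum_comm]
        refine Finset.sum_congr rfl fun i _ => ?_
        rw [Finset.sum_comm]
        refine Finset.sum_congr rfl fun j _ => ?_
        rw [Finset.mul_sum]
        exact Finset.sum_congr rfl fun t _ => by ring
    have key : star x ⬝ᵥ M *ᵥ x
        = ((σ2 * ∑ s, Complex.normSq (x s)
            + ∑ i, ∑ j, β i j * Complex.normSq (c i j) : ℝ) : ℂ) := by
      calc star x ⬝ᵥ M *ᵥ x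
          = ∑ s, conj (x s) *
              ((σ2 : ℂ) * x s + ∑ i, ∑ j, (β i j : ℂ) * φ i j s * conj (c i j)) := by
            refine Finset.sum_congr rfl fun s _ => ?_
            rw [hrow s]; rfl
        _ = (σ2 : ℂ) * ∑ s, conj (x s) * x s
              + ∑ i, ∑ j, (β i j : ℂ) * (c i j * conj (c i j)) := by
            simp only [mul_add, Finset.sum_add_distrib]
            congr 1
            · rw [Finset.mul_sum]
              exact Finset.sum_congr rfl fun s _ => by ring
            · simp only [Finset.mul_sum]
              rw [Finset.sum_comm]
              refine Finset.sum_congr rfl fun i _ => ?_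
              rw [Finset.sum_comm]
              refine Finset.sum_congr rfl fun j _ => ?_
              simp only [hc, Finset.sum_mul, Finset.mul_sum]
              exact Finset.sum_congr rfl fun s _ => by ring
        _ = _ := by
            push_cast
            congr 1
            · rw [Finset.mul_sum, Finset.mul_sum]
              exact Finset.sum_congr rfl fun s _ => by
                rw [mul_comm (conj (x s)) (x s), Complex.mul_conj]
            · refine Finset.sum_congr rfl fun i _ => Finset.sum_congr rfl fun j _ => ?_
              rw [Complex.mul_conj]
    rw [key, Complex.zero_lt_real]
    have h1 : 0 < ∑ s, Complex.normSq (x s) := by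
      obtain ⟨s, hs⟩ := Function.ne_iff.mp hx
      exact Finset.sum_pos' (fun t _ => Complex.normSq_nonneg _)
        ⟨s, Finset.mem_univ s, by simpa [Complex.normSq_pos] using hs⟩
    have h2 : 0 ≤ ∑ i, ∑ j, β i j * Complex.normSq (c i j) :=
      Finset.sum_nonneg fun i _ => Finset.sum_nonneg fun j _ =>
        mul_nonneg (hβ i j) (Complex.normSq_nonneg _)
    positivity

/-- Optimal auxiliary-variable update in the quadratic transform for pilot design:
with `μ* l k = β_{llk} • (D_l φ)⁻¹ *ᵥ φ_{lk}`, for every `μ` one has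
`f φ μ ≤ f φ μ*`, with equality iff `μ = μ*`. -/
theorem pilot_optimal_auxiliary_update (L K τ : ℕ)
    (hL : 0 < L) (hK : 0 < K) (hτ : 0 < τ)
    (σ2 : ℝ) (hσ2 : 0 < σ2)
    (β : Fin L → Fin L → Fin K → ℝ) (hβ : ∀ l i j, 0 ≤ β l i j)
    (α : Fin L → Fin K → ℝ) (hα : ∀ l k, 0 < α l k)
    (D : Fin L → (Fin L → Fin K → (Fin τ → ℂ)) → Matrix (Fin τ) (Fin τ) ℂ)
    (hD : ∀ l φ s t, D l φ s t =
      (σ2 : ℂ) * (if s = t then 1 else 0) +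
        ∑ i : Fin L, ∑ j : Fin K, (β l i j : ℂ) * (φ i j s) * conj (φ i j t))
    (f : (Fin L → Fin K → (Fin τ → ℂ)) → (Fin L → Fin K → (Fin τ → ℂ)) → ℝ)
    (hf : ∀ φ μ, f φ μ = ∑ l : Fin L, ∑ k : Fin K,
      α l k * (2 * (β l l k) * (star (μ l k) ⬝ᵥ (φ l k)).re -
        (star (μ l k) ⬝ᵥ ((D l φ) *ᵥ (μ l k))).re))
    (φ : Fin L → Fin K → (Fin τ → ℂ))
    (μstar : Fin L → Fin K → (Fin τ → ℂ))
    (hμstar : ∀ l k, μstar l k = (β l l k) • ((D l φ)⁻¹ *ᵥ (φ l k))) :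
    ∀ μ : Fin L → Fin K → (Fin τ → ℂ),
      f φ μ ≤ f φ μstar ∧ (f φ μ = f φ μstar ↔ μ = μstar) := by
  have hPD : ∀ l : Fin L, (D l φ).PosDef := fun l =>
    pilot_cov_posDef σ2 hσ2 (β l) (hβ l) φ (D l φ) (hD l φ)
  have hdet : ∀ l : Fin L, IsUnit (D l φ).det := fun l =>
    isUnit_iff_ne_zero.mpr (hPD l).det_pos.ne'
  have hMμ : ∀ l k, (D l φ) *ᵥ μstar l k = (β l l k) • φ l k := by
    intro l k
    rw [hμstar, mulVec_smul, mulVec_mulVec, Matrix.mul_nonsing_inv _ (hdet l), one_mulVec]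
  intro μ
  set d : Fin L → Fin K → (Fin τ → ℂ) := fun l k => μ l k - μstar l k with hd
  set q : Fin L → Fin K → ℝ := fun l k => (star (d l k) ⬝ᵥ (D l φ) *ᵥ d l k).re with hq
  -- per-term identity
  have hterm : ∀ l k,
      α l k * (2 * (β l l k) * (star (μ l k) ⬝ᵥ (φ l k)).re -
        (star (μ l k) ⬝ᵥ ((D l φ) *ᵥ (μ l k))).re)
      = α l k * (2 * (β l l k) * (star (μstar l k) ⬝ᵥ (φ l k)).re -
          (star (μstar l k) ⬝ᵥ ((D l φ) *ᵥ (μstar l k))).re) - α l k * q l k := by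
    intro l k
    have hsplit : μ l k = μstar l k + d l k := by simp [hd]
    have hA : (star (μ l k) ⬝ᵥ (φ l k)).re
        = (star (μstar l k) ⬝ᵥ (φ l k)).re + (star (d l k) ⬝ᵥ (φ l k)).re := by
      rw [hsplit, star_add, add_dotProduct, Complex.add_re]
    have hcross : (star (μstar l k) ⬝ᵥ ((D l φ) *ᵥ (d l k))).re
        = (star (d l k) ⬝ᵥ ((D l φ) *ᵥ (μstar l k))).re := by
      rw [pilot_herm_dot (hPD l).isHermitian (μstar l k) (d l k), Complex.conj_re]
    have hdot : (star (d l k) ⬝ᵥ ((D l φ) *ᵥ (μstar l k))).re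
        = β l l k * (star (d l k) ⬝ᵥ (φ l k)).re := by
      rw [hMμ, dotProduct_smul]
      simp [Complex.smul_re]
    have hB : (star (μ l k) ⬝ᵥ ((D l φ) *ᵥ (μ l k))).re
        = (star (μstar l k) ⬝ᵥ ((D l φ) *ᵥ (μstar l k))).re
          + 2 * (β l l k * (star (d l k) ⬝ᵥ (φ l k)).re) + q l k := by
      rw [hsplit, star_add, add_dotProduct, mulVec_add, dotProduct_add, dotProduct_add,
        Complex.add_re, Complex.add_re, Complex.add_re, hcross, hdot]
      simp only [hq]
      ring
    rw [hA, hB]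
    ring
  have hsum : f φ μ = f φ μstar - ∑ l, ∑ k, α l k * q l k := by
    rw [hf, hf, ← Finset.sum_sub_distrib]
    refine Finset.sum_congr rfl fun l _ => ?_
    rw [← Finset.sum_sub_distrib]
    exact Finset.sum_congr rfl fun k _ => hterm l k
  have hqnn : ∀ l k, 0 ≤ q l k := by
    intro l k
    by_cases h : d l k = 0
    · simp [hq, h]
    · have := (hPD l).dotProduct_mulVec_pos h
      rw [Complex.lt_def] at this
      exact le_of_lt (by simpa [hq] using this.1)
  have hqpos : ∀ l k, d l k ≠ 0 → 0 < q l k := by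
    intro l k h
    have := (hPD l).dotProduct_mulVec_pos h
    rw [Complex.lt_def] at this
    simpa [hq] using this.1
  have hS : 0 ≤ ∑ l, ∑ k, α l k * q l k :=
    Finset.sum_nonneg fun l _ => Finset.sum_nonneg fun k _ =>
      mul_nonneg (hα l k).le (hqnn l k)
  constructor
  · linarith [hS, hsum]
  constructor
  · intro h
    have hS0 : ∑ l, ∑ k, α l k * q l k = 0 := by linarith [hsum, h]
    have hall : ∀ l ∈ Finset.univ, ∀ k ∈ Finset.univ, α l k * q l k = 0 := by
      intro l _
      have := (Finset.sum_eq_zero_iff_of_nonneg fun l _ =>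
        Finset.sum_nonneg fun k _ => mul_nonneg (hα l k).le (hqnn l k)).mp hS0 l
        (Finset.mem_univ l)
      exact (Finset.sum_eq_zero_iff_of_nonneg fun k _ =>
        mul_nonneg (hα l k).le (hqnn l k)).mp this
    funext l k
    by_contra hne
    have hdne : d l k ≠ 0 := by
      simp only [hd, sub_ne_zero]
      exact hne
    have := hall l (Finset.mem_univ l) k (Finset.mem_univ k)
    have : 0 < α l k * q l k := mul_pos (hα l k) (hqpos l k hdne)
    linarith
  · intro h; rw [h]
end

section
/- Assume β l i j ≥ 0 for all l, i, j, α l k > 0 for all l, k, σ² > 0, and P > 0. Let S be the feasible set of pilots { φ : ∀ l k, Re (star (φ l k) ⬝ᵥ (φ l k)) ≤ τ * P }. Let φ ∈ S, let μ* be defined by μ* l k = (β l l k) • ((D l φ)⁻¹ *ᵥ (φ l k)), and let φ' ∈ S satisfy f φ'' μ* ≤ f φ' μ* for all φ'' ∈ S. Then G φ ≤ G φ'. (Each iteration of the proposed nonorthogonal pilot design — update μ optimally, then maximize f(·, μ) over the feasible pilots — does not decrease the objective G, equivalently the weighted sum MSE is nonincreasing.) -/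
open Matrix ComplexConjugate
open scoped ComplexOrder

lemma re_dot_comm {n : ℕ} (a c : Fin n → ℂ) : (star a ⬝ᵥ c).re = (star c ⬝ᵥ a).re := by
  rw [star_dotProduct]
  simp

lemma re_nonneg_of_nonneg' {z : ℂ} (h : 0 ≤ z) : 0 ≤ z.re := (Complex.le_def.mp h).1

lemma key_ineq_s10 {n : ℕ} {Dm : Matrix (Fin n) (Fin n) ℂ} (hDm : Dm.PosDef)
    (b : ℝ) (u v : Fin n → ℂ) :
    2 * b * (star u ⬝ᵥ v).re - (star u ⬝ᵥ (Dm *ᵥ u)).re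
      ≤ b ^ 2 * (star v ⬝ᵥ (Dm⁻¹ *ᵥ v)).re := by
  set q : Fin n → ℂ := Dm⁻¹ *ᵥ v with hq
  have hDq : Dm *ᵥ q = v := by
    rw [hq, mulVec_mulVec, Matrix.mul_nonsing_inv _ (isUnit_iff_isUnit_det _ |>.mp hDm.isUnit),
      one_mulVec]
  set w : Fin n → ℂ := u - (b : ℂ) • q with hw
  have h0 : 0 ≤ (star w ⬝ᵥ (Dm *ᵥ w)).re := re_nonneg_of_nonneg' (hDm.posSemidef.dotProduct_mulVec_nonneg w)
  have expand : star w ⬝ᵥ (Dm *ᵥ w) =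
      star u ⬝ᵥ (Dm *ᵥ u) - (b : ℂ) * (star u ⬝ᵥ v) - (b : ℂ) * (star q ⬝ᵥ (Dm *ᵥ u))
        + (b : ℂ) * ((b : ℂ) * (star q ⬝ᵥ v)) := by
    simp only [hw, mulVec_sub, mulVec_smul, hDq, star_sub, star_smul, sub_dotProduct,
      dotProduct_sub, smul_dotProduct, dotProduct_smul, smul_eq_mul, Complex.star_def,
      Complex.conj_ofReal]
    ring
  have h1 : (star q ⬝ᵥ (Dm *ᵥ u)).re = (star u ⬝ᵥ v).re := by
    rw [re_dot_comm, star_mulVec, hDm.isHermitian.eq, ← dotProduct_mulVec, hDq]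
  have h2 : (star q ⬝ᵥ v).re = (star v ⬝ᵥ q).re := re_dot_comm _ _
  have hbre : ∀ z : ℂ, ((b:ℂ) * z).re = b * z.re := fun z => by
    simp [Complex.mul_re]
  have hre : (star w ⬝ᵥ (Dm *ᵥ w)).re = (star u ⬝ᵥ (Dm *ᵥ u)).re
      - b * (star u ⬝ᵥ v).re - b * (star u ⬝ᵥ v).re + b * (b * (star v ⬝ᵥ q).re) := by
    rw [expand]
    simp only [Complex.sub_re, Complex.add_re, hbre, h1, h2]
  rw [hre] at h0
  nlinarith [h0]

lemma key_eq_s10 {n : ℕ} {Dm : Matrix (Fin n) (Fin n) ℂ} (hDm : Dm.PosDef)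
    (b : ℝ) (v : Fin n → ℂ) :
    2 * b * (star ((b : ℝ) • (Dm⁻¹ *ᵥ v)) ⬝ᵥ v).re
      - (star ((b : ℝ) • (Dm⁻¹ *ᵥ v)) ⬝ᵥ (Dm *ᵥ ((b : ℝ) • (Dm⁻¹ *ᵥ v)))).re
      = b ^ 2 * (star v ⬝ᵥ (Dm⁻¹ *ᵥ v)).re := by
  set q : Fin n → ℂ := Dm⁻¹ *ᵥ v with hq
  have hDq : Dm *ᵥ q = v := by
    rw [hq, mulVec_mulVec, Matrix.mul_nonsing_inv _ (isUnit_iff_isUnit_det _ |>.mp hDm.isUnit),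
      one_mulVec]
  have hbre : ∀ z : ℂ, ((b:ℂ) * z).re = b * z.re := fun z => by
    simp [Complex.mul_re]
  have h2 : (star q ⬝ᵥ v).re = (star v ⬝ᵥ q).re := re_dot_comm _ _
  have e1 : star ((b : ℝ) • q) ⬝ᵥ v = (b : ℂ) * (star q ⬝ᵥ v) := by
    simp only [star_smul, smul_dotProduct, Complex.real_smul, smul_eq_mul, star_trivial,
      Complex.star_def, Complex.conj_ofReal]
  have e2 : star ((b : ℝ) • q) ⬝ᵥ (Dm *ᵥ ((b : ℝ) • q)) = (b : ℂ) * ((b : ℂ) * (star q ⬝ᵥ v)) := by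
    have : Dm *ᵥ ((b : ℝ) • q) = (b : ℂ) • v := by
      rw [show ((b : ℝ) • q : Fin n → ℂ) = (b : ℂ) • q by simp [Complex.real_smul], mulVec_smul, hDq]
    rw [this]
    simp only [star_smul, smul_dotProduct, dotProduct_smul, smul_eq_mul, star_trivial,
      Complex.real_smul]
  rw [e1, e2]
  simp only [hbre, h2]
  ring

lemma D_posDef {L K τ : ℕ} (σ2 : ℝ) (hσ2 : 0 < σ2) (βl : Fin L → Fin K → ℝ)
    (hβ : ∀ i j, 0 ≤ βl i j) (ψ : Fin L → Fin K → (Fin τ → ℂ))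
    (M : Matrix (Fin τ) (Fin τ) ℂ)
    (hM : ∀ s t, M s t = (σ2 : ℂ) * (if s = t then 1 else 0) +
        ∑ i : Fin L, ∑ j : Fin K, (βl i j : ℂ) * (ψ i j s) * conj (ψ i j t)) :
    M.PosDef := by
  classical
  set A : Matrix (Fin L × Fin K) (Fin τ) ℂ :=
    fun p t => (Real.sqrt (βl p.1 p.2) : ℂ) * conj (ψ p.1 p.2 t) with hA
  have hdec : M = diagonal (fun _ => (σ2 : ℂ)) + Aᴴ * A := by
    ext s t
    rw [hM]
    simp only [Matrix.add_apply, diagonal_apply, Matrix.mul_apply, conjTranspose_apply, hA,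
      Fintype.sum_prod_type, star_mul', Complex.star_def, Complex.conj_ofReal, RingHomCompTriple.comp_apply, Complex.conj_conj,
      mul_ite, mul_one, mul_zero]
    congr 1
    rw [← hA, Matrix.mul_apply, Fintype.sum_prod_type]
    simp only [conjTranspose_apply]
    simp only [hA, star_mul', Complex.star_def, Complex.conj_ofReal, Complex.conj_conj]
    refine Finset.sum_congr rfl fun i _ => Finset.sum_congr rfl fun j _ => ?_
    have hsq : ((Real.sqrt (βl i j) : ℂ)) * ((Real.sqrt (βl i j) : ℂ)) = (βl i j : ℂ) := by
      rw [← Complex.ofReal_mul, Real.mul_self_sqrt (hβ i j)]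
    calc (βl i j : ℂ) * (ψ i j s) * conj (ψ i j t)
        = ((Real.sqrt (βl i j) : ℂ) * (Real.sqrt (βl i j) : ℂ)) * (ψ i j s) * conj (ψ i j t) := by
          rw [hsq]
      _ = (Real.sqrt (βl i j) : ℂ) * ψ i j s * ((Real.sqrt (βl i j) : ℂ) * conj (ψ i j t)) := by
          ring
  rw [hdec]
  exact (Matrix.PosDef.diagonal fun _ => by exact_mod_cast hσ2).add_posSemidef
    (posSemidef_conjTranspose_mul_self A)

/-- Monotonicity of an iteration of the proposed nonorthogonal pilot design:
starting from a feasible `φ`, updating the auxiliary variable optimally to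
`μ* l k = β_{llk} • (D_l φ)⁻¹ *ᵥ φ_{lk}` and then maximizing `f (·, μ*)` over the
feasible set `S` to obtain `φ'` does not decrease the objective: `G φ ≤ G φ'`. -/
theorem pilot_iteration_nondecreasing (L K τ : ℕ)
    (hL : 0 < L) (hK : 0 < K) (hτ : 0 < τ)
    (σ2 : ℝ) (hσ2 : 0 < σ2)
    (β : Fin L → Fin L → Fin K → ℝ) (hβ : ∀ l i j, 0 ≤ β l i j)
    (α : Fin L → Fin K → ℝ) (hα : ∀ l k, 0 < α l k)
    (P : ℝ) (hP : 0 < P)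
    (D : Fin L → (Fin L → Fin K → (Fin τ → ℂ)) → Matrix (Fin τ) (Fin τ) ℂ)
    (hD : ∀ l φ s t, D l φ s t =
      (σ2 : ℂ) * (if s = t then 1 else 0) +
        ∑ i : Fin L, ∑ j : Fin K, (β l i j : ℂ) * (φ i j s) * conj (φ i j t))
    (G : (Fin L → Fin K → (Fin τ → ℂ)) → ℝ)
    (hG : ∀ φ, G φ = ∑ l : Fin L, ∑ k : Fin K,
      α l k * (β l l k) ^ 2 * (star (φ l k) ⬝ᵥ ((D l φ)⁻¹ *ᵥ (φ l k))).re)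
    (f : (Fin L → Fin K → (Fin τ → ℂ)) → (Fin L → Fin K → (Fin τ → ℂ)) → ℝ)
    (hf : ∀ φ μ, f φ μ = ∑ l : Fin L, ∑ k : Fin K,
      α l k * (2 * (β l l k) * (star (μ l k) ⬝ᵥ (φ l k)).re -
        (star (μ l k) ⬝ᵥ ((D l φ) *ᵥ (μ l k))).re))
    (S : Set (Fin L → Fin K → (Fin τ → ℂ)))
    (hS : S = {φ | ∀ l k, (star (φ l k) ⬝ᵥ (φ l k)).re ≤ (τ : ℝ) * P})
    (φ : Fin L → Fin K → (Fin τ → ℂ)) (hφ : φ ∈ S)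
    (μstar : Fin L → Fin K → (Fin τ → ℂ))
    (hμstar : ∀ l k, μstar l k = (β l l k) • ((D l φ)⁻¹ *ᵥ (φ l k)))
    (φ' : Fin L → Fin K → (Fin τ → ℂ)) (hφ' : φ' ∈ S)
    (hopt : ∀ φ'' ∈ S, f φ'' μstar ≤ f φ' μstar) :
    G φ ≤ G φ' := by
  have hDpos : ∀ (ψ : Fin L → Fin K → (Fin τ → ℂ)) (l : Fin L), (D l ψ).PosDef := fun ψ l =>
    D_posDef σ2 hσ2 (fun i j => β l i j) (fun i j => hβ l i j) ψ (D l ψ) (hD l ψ)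
  have heq : G φ = f φ μstar := by
    rw [hG, hf]
    refine Finset.sum_congr rfl fun l _ => Finset.sum_congr rfl fun k _ => ?_
    rw [hμstar l k, key_eq_s10 (hDpos φ l) (β l l k) (φ l k)]
    ring
  have hle : f φ' μstar ≤ G φ' := by
    rw [hG, hf]
    refine Finset.sum_le_sum fun l _ => Finset.sum_le_sum fun k _ => ?_
    have h1 := key_ineq_s10 (hDpos φ' l) (β l l k) (μstar l k) (φ' l k)
    have h2 := mul_le_mul_of_nonneg_left h1 (hα l k).le
    refine le_trans (le_of_eq (by ring)) (le_trans h2 (le_of_eq (by ring)))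
  calc G φ = f φ μstar := heq
    _ ≤ f φ' μstar := hopt φ hφ
    _ ≤ G φ' := hle
end

section
/- In the correlated multicell setup, for every family Λ : Fin L → Fin K → Matrix (Fin τ × Fin M') (Fin M') ℂ, one has f φ Λ ≤ Σ_{l,k} α l k * Re (trace ((W l k) * (U l)⁻¹ * (W l k)ᴴ)), with equality if and only if Λ l k = (U l)⁻¹ * (W l k)ᴴ for every (l,k). (Hence maximizing the weighted sum Σ α_{lk} tr(W_{lk} U_l⁻¹ W_{lk}ᴴ) over pilots is equivalent to jointly maximizing f over pilots and Λ, the optimal auxiliary update being Λ_{lk} = U_l⁻¹ W_{lk}ᴴ.) -/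
open Matrix ComplexConjugate
open scoped ComplexOrder

open scoped MatrixOrder in
noncomputable def Matrix.PosSemidef.sqrt {n : Type*} [Fintype n] [DecidableEq n]
    {A : Matrix n n ℂ} (_hA : A.PosSemidef) : Matrix n n ℂ :=
  CFC.sqrt A

open scoped MatrixOrder in
lemma Matrix.PosSemidef.posSemidef_sqrt {n : Type*} [Fintype n] [DecidableEq n]
    {A : Matrix n n ℂ} (hA : A.PosSemidef) : hA.sqrt.PosSemidef :=
  (CFC.sqrt_nonneg A).posSemidef

open scoped MatrixOrder in
lemma Matrix.PosSemidef.sqrt_mul_self {n : Type*} [Fintype n] [DecidableEq n]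
    {A : Matrix n n ℂ} (hA : A.PosSemidef) : hA.sqrt * hA.sqrt = A :=
  CFC.sqrt_mul_sqrt_self A hA.nonneg

lemma trace_re_frobenius {m n : Type*} [Fintype m] [Fintype n] (A : Matrix m n ℂ) :
    (Matrix.trace (Aᴴ * A)).re = ∑ j, ∑ i, Complex.normSq (A i j) := by
  have h : Matrix.trace (Aᴴ * A) = ∑ j, ∑ i, ((Complex.normSq (A i j) : ℂ)) := by
    simp [Matrix.trace, Matrix.mul_apply, Matrix.diag, Matrix.conjTranspose_apply,
      Complex.normSq_eq_conj_mul_self]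
  rw [h]; norm_cast

lemma trace_re_nonneg {m n : Type*} [Fintype m] [Fintype n] (A : Matrix m n ℂ) :
    0 ≤ (Matrix.trace (Aᴴ * A)).re := by
  rw [trace_re_frobenius]
  exact Finset.sum_nonneg fun j _ => Finset.sum_nonneg fun i _ => Complex.normSq_nonneg _

lemma trace_re_eq_zero_iff {m n : Type*} [Fintype m] [Fintype n] (A : Matrix m n ℂ) :
    (Matrix.trace (Aᴴ * A)).re = 0 ↔ A = 0 := by
  rw [trace_re_frobenius]
  constructor
  · intro h
    ext i j
    have h1 := (Finset.sum_eq_zero_iff_of_nonneg (fun j _ =>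
      Finset.sum_nonneg fun i _ => Complex.normSq_nonneg (A i j))).mp h j (Finset.mem_univ _)
    have h2 := (Finset.sum_eq_zero_iff_of_nonneg (fun i _ =>
      Complex.normSq_nonneg (A i j))).mp h1 i (Finset.mem_univ _)
    simpa using Complex.normSq_eq_zero.mp h2
  · intro h; simp [h]

/-- Correlated multicell setup: for every family of auxiliary matrices `Λ`, the
matrix quadratic-transform objective satisfies
`f φ Λ ≤ Σ_{l,k} α_{lk} Re tr(W_{lk} U_l⁻¹ W_{lk}ᴴ)`, with equality iff
`Λ l k = (U l)⁻¹ * (W l k)ᴴ` for every `(l,k)`. -/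
theorem correlated_matrix_transform_bound (L K τ M' : ℕ)
    (hL : 0 < L) (hK : 0 < K) (hτ : 0 < τ) (hM' : 0 < M')
    (σ2 : ℝ) (hσ2 : 0 < σ2)
    (β : Fin L → Fin L → Fin K → ℝ) (hβ : ∀ l i j, 0 ≤ β l i j)
    (α : Fin L → Fin K → ℝ) (hα : ∀ l k, 0 < α l k)
    (φ : Fin L → Fin K → (Fin τ → ℂ))
    (R : Fin L → Fin L → Fin K → Matrix (Fin M') (Fin M') ℂ)
    (hR : ∀ l i j, (R l i j).PosSemidef)
    (W : Fin L → Fin K → Matrix (Fin M') (Fin τ × Fin M') ℂ)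
    (hW : ∀ (l : Fin L) (k : Fin K) (n : Fin M') (sm : Fin τ × Fin M'),
      W l k n sm = (β l l k : ℂ) * conj (φ l k sm.1) * (R l l k) n sm.2)
    (U : Fin L → Matrix (Fin τ × Fin M') (Fin τ × Fin M') ℂ)
    (hU : ∀ (l : Fin L) (sm tn : Fin τ × Fin M'),
      U l sm tn = (σ2 : ℂ) * (if sm = tn then 1 else 0) +
        ∑ i : Fin L, ∑ j : Fin K,
          (β l i j : ℂ) * (φ i j sm.1) * conj (φ i j tn.1) * (R l i j) sm.2 tn.2)
    (f : (Fin L → Fin K → Matrix (Fin τ × Fin M') (Fin M') ℂ) → ℝ)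
    (hf : ∀ Λ : Fin L → Fin K → Matrix (Fin τ × Fin M') (Fin M') ℂ,
      f Λ = ∑ l : Fin L, ∑ k : Fin K,
        α l k * (2 * (Matrix.trace ((W l k) * (Λ l k))).re -
          (Matrix.trace ((Λ l k)ᴴ * (U l) * (Λ l k))).re)) :
    ∀ Λ : Fin L → Fin K → Matrix (Fin τ × Fin M') (Fin M') ℂ,
      f Λ ≤ ∑ l : Fin L, ∑ k : Fin K,
        α l k * (Matrix.trace ((W l k) * (U l)⁻¹ * (W l k)ᴴ)).re ∧
      (f Λ = ∑ l : Fin L, ∑ k : Fin K,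
          α l k * (Matrix.trace ((W l k) * (U l)⁻¹ * (W l k)ᴴ)).re ↔
        ∀ (l : Fin L) (k : Fin K), Λ l k = (U l)⁻¹ * (W l k)ᴴ) := by
  classical
  -- U is positive definite
  set B : Fin L → Fin L → Fin K → Matrix (Fin M') (Fin τ × Fin M') ℂ :=
    fun l i j => Matrix.of fun (n : Fin M') (tm : Fin τ × Fin M') =>
      (Real.sqrt (β l i j) : ℂ) * conj (φ i j tm.1) * ((hR l i j).sqrt) n tm.2 with hB
  have hUdec : ∀ l, U l = (σ2 : ℂ) • (1 : Matrix (Fin τ × Fin M') (Fin τ × Fin M') ℂ) +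
      ∑ i : Fin L, ∑ j : Fin K, (B l i j)ᴴ * (B l i j) := by
    intro l
    ext sm tn
    rw [hU l sm tn]
    simp only [Matrix.add_apply, Matrix.smul_apply, Matrix.one_apply, Matrix.sum_apply,
      smul_eq_mul]
    congr 1
    refine Finset.sum_congr rfl fun i _ => Finset.sum_congr rfl fun j _ => ?_
    have hb : (Real.sqrt (β l i j) : ℂ) * (Real.sqrt (β l i j) : ℂ) = (β l i j : ℂ) := by
      rw [← Complex.ofReal_mul, Real.mul_self_sqrt (hβ l i j)]
    have hQh : ∀ p m, conj ((hR l i j).sqrt p m) = (hR l i j).sqrt m p := by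
      intro p m
      have := (hR l i j).posSemidef_sqrt.isHermitian
      conv_rhs => rw [← this]
      simp [Matrix.conjTranspose_apply]
    calc (β l i j : ℂ) * (φ i j sm.1) * conj (φ i j tn.1) * (R l i j) sm.2 tn.2
        = (β l i j : ℂ) * (φ i j sm.1) * conj (φ i j tn.1) *
            (((hR l i j).sqrt * (hR l i j).sqrt) sm.2 tn.2) := by
          rw [(hR l i j).sqrt_mul_self]
      _ = ∑ p, conj ((B l i j) p sm) * (B l i j) p tn := by
          rw [Matrix.mul_apply, Finset.mul_sum]
          refine Finset.sum_congr rfl fun p _ => ?_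
          simp only [hB, Matrix.of_apply, _root_.map_mul, Complex.conj_ofReal,
            Complex.conj_conj, hQh]
          linear_combination -(φ i j sm.1 * conj (φ i j tn.1) * (hR l i j).sqrt sm.2 p *
            (hR l i j).sqrt p tn.2) * hb
      _ = ((B l i j)ᴴ * (B l i j)) sm tn := by
          rw [Matrix.mul_apply]
          refine Finset.sum_congr rfl fun p _ => ?_
          simp [Matrix.conjTranspose_apply]
  have hUpd : ∀ l, (U l).PosDef := by
    intro l
    rw [hUdec l]
    refine Matrix.PosDef.add_posSemidef ?_ ?_
    · rw [Matrix.smul_one_eq_diagonal]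
      exact Matrix.PosDef.diagonal fun i => Complex.zero_lt_real.mpr hσ2
    · refine Finset.sum_induction _ _ (fun a b ha hb => ha.add hb) Matrix.PosSemidef.zero ?_
      intro i _
      refine Finset.sum_induction _ _ (fun a b ha hb => ha.add hb) Matrix.PosSemidef.zero ?_
      intro j _
      exact Matrix.posSemidef_conjTranspose_mul_self _
  have hdet : ∀ l, IsUnit (U l).det := fun l => isUnit_iff_ne_zero.mpr (hUpd l).det_pos.ne'
  have hUmul : ∀ l, U l * (U l)⁻¹ = 1 := fun l => Matrix.mul_nonsing_inv _ (hdet l)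
  have hUmul' : ∀ l, (U l)⁻¹ * U l = 1 := fun l => Matrix.nonsing_inv_mul _ (hdet l)
  have hUinvH : ∀ l, ((U l)⁻¹)ᴴ = (U l)⁻¹ := by
    intro l
    rw [Matrix.conjTranspose_nonsing_inv, (hUpd l).isHermitian.eq]
  intro Λ
  -- the residual term
  set D : Fin L → Fin K → Matrix (Fin τ × Fin M') (Fin M') ℂ :=
    fun l k => Λ l k - (U l)⁻¹ * (W l k)ᴴ with hD
  set r : Fin L → Fin K → ℝ := fun l k => (Matrix.trace ((D l k)ᴴ * U l * D l k)).re with hr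
  -- completing the square
  have hexp : ∀ l k, (D l k)ᴴ * U l * D l k =
      (Λ l k)ᴴ * U l * Λ l k - (W l k * Λ l k)ᴴ - W l k * Λ l k +
        W l k * (U l)⁻¹ * (W l k)ᴴ := by
    intro l k
    have hA2 : ((U l)⁻¹ * (W l k)ᴴ)ᴴ = W l k * (U l)⁻¹ := by
      rw [Matrix.conjTranspose_mul, Matrix.conjTranspose_conjTranspose, hUinvH]
    have hA3 : W l k * (U l)⁻¹ * U l = W l k := by
      rw [Matrix.mul_assoc, hUmul' l, Matrix.mul_one]
    have hA1 : U l * ((U l)⁻¹ * (W l k)ᴴ) = (W l k)ᴴ := by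
      rw [← Matrix.mul_assoc, hUmul l, Matrix.one_mul]
    rw [hD]
    simp only [Matrix.conjTranspose_sub, Matrix.sub_mul, Matrix.mul_sub, hA2, hA3, hA1]
    rw [Matrix.mul_assoc ((Λ l k)ᴴ) (U l) ((U l)⁻¹ * (W l k)ᴴ), hA1,
      Matrix.conjTranspose_mul (W l k) (Λ l k),
      ← Matrix.mul_assoc (W l k) ((U l)⁻¹) ((W l k)ᴴ)]
    abel
  have hkey : ∀ l k, 2 * (Matrix.trace (W l k * Λ l k)).re -
      (Matrix.trace ((Λ l k)ᴴ * U l * Λ l k)).re =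
      (Matrix.trace (W l k * (U l)⁻¹ * (W l k)ᴴ)).re - r l k := by
    intro l k
    have h1 : Matrix.trace ((W l k * Λ l k)ᴴ) = star (Matrix.trace (W l k * Λ l k)) :=
      Matrix.trace_conjTranspose _
    have := congrArg (fun M => (Matrix.trace M).re) (hexp l k)
    simp only [Matrix.trace_sub, Matrix.trace_add, Complex.sub_re, Complex.add_re, h1,
      Complex.star_def, Complex.conj_re] at this
    rw [hr]
    dsimp only
    linarith [this]
  -- residual is nonnegative, zero iff D = 0
  have hsq : ∀ l k, (D l k)ᴴ * U l * D l k =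
      ((hUpd l).posSemidef.sqrt * D l k)ᴴ * ((hUpd l).posSemidef.sqrt * D l k) := by
    intro l k
    conv_rhs => rw [Matrix.conjTranspose_mul, (hUpd l).posSemidef.posSemidef_sqrt.isHermitian.eq,
      Matrix.mul_assoc ((D l k)ᴴ), ← Matrix.mul_assoc ((hUpd l).posSemidef.sqrt),
      (hUpd l).posSemidef.sqrt_mul_self, ← Matrix.mul_assoc]
  have hrnn : ∀ l k, 0 ≤ r l k := by
    intro l k
    rw [hr]; dsimp only; rw [hsq l k]
    exact trace_re_nonneg _
  have hr0 : ∀ l k, r l k = 0 ↔ Λ l k = (U l)⁻¹ * (W l k)ᴴ := by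
    intro l k
    rw [hr]; dsimp only; rw [hsq l k, trace_re_eq_zero_iff]
    constructor
    · intro h
      have hQdet : IsUnit ((hUpd l).posSemidef.sqrt).det := by
        have h2 : ((hUpd l).posSemidef.sqrt).det * ((hUpd l).posSemidef.sqrt).det =
            (U l).det := by
          rw [← Matrix.det_mul, (hUpd l).posSemidef.sqrt_mul_self]
        refine isUnit_iff_ne_zero.mpr fun h0 => (hUpd l).det_pos.ne' ?_
        rw [← h2, h0, mul_zero]
      have : D l k = 0 := by
        have := congrArg (fun M => ((hUpd l).posSemidef.sqrt)⁻¹ * M) h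
        simpa [← Matrix.mul_assoc, Matrix.nonsing_inv_mul _ hQdet] using this
      rw [hD] at this
      exact sub_eq_zero.mp this
    · intro h
      rw [hD]; dsimp only; rw [h, sub_self, Matrix.mul_zero]
  -- assemble
  have hfΛ : f Λ = (∑ l, ∑ k, α l k * (Matrix.trace (W l k * (U l)⁻¹ * (W l k)ᴴ)).re) -
      ∑ l, ∑ k, α l k * r l k := by
    rw [hf Λ, ← Finset.sum_sub_distrib]
    refine Finset.sum_congr rfl fun l _ => ?_
    rw [← Finset.sum_sub_distrib]
    refine Finset.sum_congr rfl fun k _ => ?_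
    rw [hkey l k, mul_sub]
  have hsum_nn : 0 ≤ ∑ l, ∑ k, α l k * r l k :=
    Finset.sum_nonneg fun l _ => Finset.sum_nonneg fun k _ =>
      mul_nonneg (hα l k).le (hrnn l k)
  constructor
  · rw [hfΛ]; linarith
  · rw [hfΛ, sub_eq_self]
    constructor
    · intro h
      intro l k
      have h1 := (Finset.sum_eq_zero_iff_of_nonneg (fun l _ =>
        Finset.sum_nonneg fun k _ => mul_nonneg (hα l k).le (hrnn l k))).mp h l
        (Finset.mem_univ _)
      have h2 := (Finset.sum_eq_zero_iff_of_nonneg (fun k _ =>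
        mul_nonneg (hα l k).le (hrnn l k))).mp h1 k (Finset.mem_univ _)
      have h3 : r l k = 0 := by
        rcases mul_eq_zero.mp h2 with h | h
        · exact absurd h (hα l k).ne'
        · exact h
      exact (hr0 l k).mp h3
    · intro h
      refine Finset.sum_eq_zero fun l _ => Finset.sum_eq_zero fun k _ => ?_
      rw [(hr0 l k).mpr (h l k), mul_zero]
end

section
/- In the correlated multicell setup, fix Λ : Fin L → Fin K → Matrix (Fin τ × Fin M') (Fin M') ℂ and define v : Fin L → Fin K → (Fin τ → ℂ) by (v l k) s = (α l k * β l l k : ℂ) * Σ_{n : Fin M'} Σ_{m : Fin M'} (R l l k) n m * (Λ l k) (s, m) n, and Q : Fin L → Fin K → Matrix (Fin τ) (Fin τ) ℂ by (Q l k) s t = Σ_{i : Fin L} Σ_{j : Fin K} (α i j * β i l k : ℂ) * Σ_{m : Fin M'} Σ_{n : Fin M'} (R i l k) m n * ((Λ i j) * (Λ i j)ᴴ) (s, n) (t, m). Define g φ = Σ_{l,k} 2 * Re (star (φ l k) ⬝ᵥ (v l k)) − Σ_{l,k} Re (star (φ l k) ⬝ᵥ ((Q l k) *ᵥ (φ l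 k))). Then the difference f φ Λ − g φ does not depend on the pilots: for any two pilot configurations φ and φ', f φ Λ − g φ = f φ' Λ − g φ'. (This is the rewriting of the matrix quadratic-transform objective as per-user quadratic forms in the pilots plus a pilot-independent constant.) -/
open Matrix ComplexConjugate
open scoped ComplexOrder

private lemma sum_swap6' {A B C : Type*} [Fintype A] [Fintype B] [Fintype C]
    (F : A → B → A → B → C → C → ℂ) :
    ∑ l : A, ∑ k : B, ∑ i : A, ∑ j : B, ∑ s : C, ∑ t : C, F l k i j s t =
    ∑ l : A, ∑ k : B, ∑ i : A, ∑ j : B, ∑ s : C, ∑ t : C, F i j l k t s := by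
  conv_lhs => enter [2, l, 2, k, 2, i, 2, j]; rw [Finset.sum_comm]   -- swap s,t
  conv_lhs => enter [2, l]; rw [Finset.sum_comm]                     -- swap k,i
  conv_lhs => rw [Finset.sum_comm]                                   -- swap l,i
  conv_lhs => enter [2, i, 2, l]; rw [Finset.sum_comm]               -- swap k,j
  conv_lhs => enter [2, i]; rw [Finset.sum_comm]                     -- swap l,j

private lemma sum_reorder7 {A B C D E F G : Type*} [Fintype A] [Fintype B] [Fintype C] [Fintype D]
    [Fintype E] [Fintype F] [Fintype G] (f : A → B → C → D → E → F → G → ℂ) :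
    ∑ p : A, ∑ t : B, ∑ n : C, ∑ s : D, ∑ m : E, ∑ i : F, ∑ j : G, f p t n s m i j
    = ∑ i : F, ∑ j : G, ∑ s : D, ∑ t : B, ∑ m : E, ∑ n : C, ∑ p : A, f p t n s m i j := by
  have h1 : (∑ x : A × B × C × D × E × F × G,
      f x.1 x.2.1 x.2.2.1 x.2.2.2.1 x.2.2.2.2.1 x.2.2.2.2.2.1 x.2.2.2.2.2.2) =
      ∑ p : A, ∑ t : B, ∑ n : C, ∑ s : D, ∑ m : E, ∑ i : F, ∑ j : G, f p t n s m i j := by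
    simp [Fintype.sum_prod_type]
  have h2 : (∑ x : F × G × D × B × E × C × A,
      f x.2.2.2.2.2.2 x.2.2.2.1 x.2.2.2.2.2.1 x.2.2.1 x.2.2.2.2.1 x.1 x.2.1) =
      ∑ i : F, ∑ j : G, ∑ s : D, ∑ t : B, ∑ m : E, ∑ n : C, ∑ p : A, f p t n s m i j := by
    simp [Fintype.sum_prod_type]
  rw [← h1, ← h2]
  exact Fintype.sum_equiv
    ⟨fun x => (x.2.2.2.2.2.1, x.2.2.2.2.2.2, x.2.2.2.1, x.2.1, x.2.2.2.2.1, x.2.2.1, x.1),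
     fun x => (x.2.2.2.2.2.2, x.2.2.2.1, x.2.2.2.2.2.1, x.2.2.1, x.2.2.2.2.1, x.1, x.2.1),
     fun x => rfl, fun x => rfl⟩ _ _ (fun x => rfl)

private lemma sum_reorder7b {A B C D E F G : Type*} [Fintype A] [Fintype B] [Fintype C] [Fintype D]
    [Fintype E] [Fintype F] [Fintype G] (f : A → B → C → D → E → F → G → ℂ) :
    ∑ s : A, ∑ t : B, ∑ i : C, ∑ j : D, ∑ m : E, ∑ n : F, ∑ p : G, f s t i j m n p
    = ∑ i : C, ∑ j : D, ∑ s : A, ∑ t : B, ∑ m : E, ∑ n : F, ∑ p : G, f s t i j m n p := by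
  have h1 : (∑ x : A × B × C × D × E × F × G,
      f x.1 x.2.1 x.2.2.1 x.2.2.2.1 x.2.2.2.2.1 x.2.2.2.2.2.1 x.2.2.2.2.2.2) =
      ∑ s : A, ∑ t : B, ∑ i : C, ∑ j : D, ∑ m : E, ∑ n : F, ∑ p : G, f s t i j m n p := by
    simp [Fintype.sum_prod_type]
  have h2 : (∑ x : C × D × A × B × E × F × G,
      f x.2.2.1 x.2.2.2.1 x.1 x.2.1 x.2.2.2.2.1 x.2.2.2.2.2.1 x.2.2.2.2.2.2) =
      ∑ i : C, ∑ j : D, ∑ s : A, ∑ t : B, ∑ m : E, ∑ n : F, ∑ p : G, f s t i j m n p := by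
    simp [Fintype.sum_prod_type]
  rw [← h1, ← h2]
  exact Fintype.sum_equiv
    ⟨fun x => (x.2.2.1, x.2.2.2.1, x.1, x.2.1, x.2.2.2.2),
     fun x => (x.2.2.1, x.2.2.2.1, x.1, x.2.1, x.2.2.2.2),
     fun x => rfl, fun x => rfl⟩ _ _ (fun x => rfl)

/-- Rewriting of the correlated-channel matrix quadratic-transform objective as
per-user quadratic forms in the pilots plus a pilot-independent constant:
with `v`, `Q` and `g` as defined from a fixed `Λ`, the difference `f φ Λ − g φ`
does not depend on the pilot configuration `φ`. -/
theorem correlated_objective_quadratic_rewrite (L K τ M' : ℕ)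
    (hL : 0 < L) (hK : 0 < K) (hτ : 0 < τ) (hM' : 0 < M')
    (σ2 : ℝ) (hσ2 : 0 < σ2)
    (β : Fin L → Fin L → Fin K → ℝ)
    (α : Fin L → Fin K → ℝ)
    (R : Fin L → Fin L → Fin K → Matrix (Fin M') (Fin M') ℂ)
    (W : (Fin L → Fin K → (Fin τ → ℂ)) →
      Fin L → Fin K → Matrix (Fin M') (Fin τ × Fin M') ℂ)
    (hW : ∀ (φ : Fin L → Fin K → (Fin τ → ℂ)) (l : Fin L) (k : Fin K)
      (n : Fin M') (sm : Fin τ × Fin M'),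
      W φ l k n sm = (β l l k : ℂ) * conj (φ l k sm.1) * (R l l k) n sm.2)
    (U : (Fin L → Fin K → (Fin τ → ℂ)) →
      Fin L → Matrix (Fin τ × Fin M') (Fin τ × Fin M') ℂ)
    (hU : ∀ (φ : Fin L → Fin K → (Fin τ → ℂ)) (l : Fin L) (sm tn : Fin τ × Fin M'),
      U φ l sm tn = (σ2 : ℂ) * (if sm = tn then 1 else 0) +
        ∑ i : Fin L, ∑ j : Fin K,
          (β l i j : ℂ) * (φ i j sm.1) * conj (φ i j tn.1) * (R l i j) sm.2 tn.2)
    (f : (Fin L → Fin K → (Fin τ → ℂ)) →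
      (Fin L → Fin K → Matrix (Fin τ × Fin M') (Fin M') ℂ) → ℝ)
    (hf : ∀ (φ : Fin L → Fin K → (Fin τ → ℂ))
      (Λ : Fin L → Fin K → Matrix (Fin τ × Fin M') (Fin M') ℂ),
      f φ Λ = ∑ l : Fin L, ∑ k : Fin K,
        α l k * (2 * (Matrix.trace ((W φ l k) * (Λ l k))).re -
          (Matrix.trace ((Λ l k)ᴴ * (U φ l) * (Λ l k))).re))
    (Λ : Fin L → Fin K → Matrix (Fin τ × Fin M') (Fin M') ℂ)
    (v : Fin L → Fin K → (Fin τ → ℂ))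
    (hv : ∀ (l : Fin L) (k : Fin K) (s : Fin τ),
      v l k s = ((α l k * β l l k : ℝ) : ℂ) *
        ∑ n : Fin M', ∑ m : Fin M', (R l l k) n m * (Λ l k) (s, m) n)
    (Q : Fin L → Fin K → Matrix (Fin τ) (Fin τ) ℂ)
    (hQ : ∀ (l : Fin L) (k : Fin K) (s t : Fin τ),
      Q l k s t = ∑ i : Fin L, ∑ j : Fin K, ((α i j * β i l k : ℝ) : ℂ) *
        ∑ m : Fin M', ∑ n : Fin M', (R i l k) m n * ((Λ i j) * (Λ i j)ᴴ) (s, n) (t, m))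
    (g : (Fin L → Fin K → (Fin τ → ℂ)) → ℝ)
    (hg : ∀ φ : Fin L → Fin K → (Fin τ → ℂ),
      g φ = (∑ l : Fin L, ∑ k : Fin K, 2 * (star (φ l k) ⬝ᵥ (v l k)).re) -
        ∑ l : Fin L, ∑ k : Fin K, (star (φ l k) ⬝ᵥ ((Q l k) *ᵥ (φ l k))).re) :
    ∀ φ φ' : Fin L → Fin K → (Fin τ → ℂ),
      f φ Λ - g φ = f φ' Λ - g φ' := by
  have key : ∀ φ : Fin L → Fin K → (Fin τ → ℂ),
      f φ Λ = g φ - σ2 * ∑ l : Fin L, ∑ k : Fin K,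
        α l k * (Matrix.trace ((Λ l k)ᴴ * (Λ l k))).re := by
    intro φ
    -- the pilot-dependent part of U
    set P : Fin L → Matrix (Fin τ × Fin M') (Fin τ × Fin M') ℂ :=
      fun l => Matrix.of fun sm tn => ∑ i : Fin L, ∑ j : Fin K,
        (β l i j : ℂ) * (φ i j sm.1) * conj (φ i j tn.1) * (R l i j) sm.2 tn.2 with hP
    have hUP : ∀ l, U φ l = (σ2 : ℂ) • (1 : Matrix (Fin τ × Fin M') (Fin τ × Fin M') ℂ) + P l := by
      intro l
      ext sm tn
      simp [hU, hP, Matrix.one_apply, mul_comm]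
    -- linear part
    have hA : ∀ (l : Fin L) (k : Fin K),
        ((α l k : ℝ) : ℂ) * Matrix.trace ((W φ l k) * (Λ l k)) =
          star (φ l k) ⬝ᵥ (v l k) := by
      intro l k
      simp only [Matrix.trace, Matrix.diag_apply, Matrix.mul_apply, hW, hv, dotProduct,
        Pi.star_apply, Fintype.sum_prod_type, Complex.ofReal_mul, Finset.mul_sum]
      rw [Finset.sum_comm]
      refine Finset.sum_congr rfl fun s _ => Finset.sum_congr rfl fun n _ =>
        Finset.sum_congr rfl fun m _ => ?_
      simp only [RCLike.star_def]
      ring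
    -- expansion of the quadratic part (lhs form)
    have hL1 : ∀ (l : Fin L) (k : Fin K),
        ((α l k : ℝ) : ℂ) * Matrix.trace ((Λ l k)ᴴ * (P l) * (Λ l k)) =
          ∑ i : Fin L, ∑ j : Fin K, ∑ s : Fin τ, ∑ t : Fin τ,
            ∑ m : Fin M', ∑ n : Fin M', ∑ p : Fin M',
              ((α l k : ℝ) : ℂ) * ((β l i j : ℝ) : ℂ) * conj ((Λ l k) (s, m) p) *
                (φ i j s) * conj (φ i j t) * (R l i j) m n * (Λ l k) (t, n) p := by
      intro l k
      simp only [Matrix.trace, Matrix.diag_apply, Matrix.mul_apply, Matrix.conjTranspose_apply,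
        hP, Matrix.of_apply, Fintype.sum_prod_type, Finset.mul_sum, Finset.sum_mul]
      rw [sum_reorder7 (fun p t n s m i j =>
        ((α l k : ℝ) : ℂ) * (star ((Λ l k) (s, m) p) *
          (((β l i j : ℝ) : ℂ) * (φ i j s) * conj (φ i j t) * (R l i j) m n) *
          (Λ l k) (t, n) p))]
      refine Finset.sum_congr rfl fun i _ => Finset.sum_congr rfl fun j _ =>
        Finset.sum_congr rfl fun s _ => Finset.sum_congr rfl fun t _ =>
        Finset.sum_congr rfl fun m _ => Finset.sum_congr rfl fun n _ =>
        Finset.sum_congr rfl fun p _ => ?_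
      simp only [RCLike.star_def]
      ring
    -- expansion of the quadratic part (rhs form)
    have hR1 : ∀ (l : Fin L) (k : Fin K),
        star (φ l k) ⬝ᵥ ((Q l k) *ᵥ (φ l k)) =
          ∑ i : Fin L, ∑ j : Fin K, ∑ s : Fin τ, ∑ t : Fin τ,
            ∑ m : Fin M', ∑ n : Fin M', ∑ p : Fin M',
              ((α i j : ℝ) : ℂ) * ((β i l k : ℝ) : ℂ) * conj ((Λ i j) (t, m) p) *
                (φ l k t) * conj (φ l k s) * (R i l k) m n * (Λ i j) (s, n) p := by
      intro l k
      simp only [dotProduct, Matrix.mulVec, Pi.star_apply, hQ, Matrix.mul_apply,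
        Matrix.conjTranspose_apply, Complex.ofReal_mul, Finset.mul_sum, Finset.sum_mul]
      rw [sum_reorder7b (fun s t i j m n p =>
        star (φ l k s) * (((α i j : ℝ) : ℂ) * ((β i l k : ℝ) : ℂ) *
          ((R i l k) m n * ((Λ i j) (s, n) p * star ((Λ i j) (t, m) p))) * (φ l k t)))]
      refine Finset.sum_congr rfl fun i _ => Finset.sum_congr rfl fun j _ =>
        Finset.sum_congr rfl fun s _ => Finset.sum_congr rfl fun t _ =>
        Finset.sum_congr rfl fun m _ => Finset.sum_congr rfl fun n _ =>
        Finset.sum_congr rfl fun p _ => ?_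
      simp only [RCLike.star_def]
      ring
    -- quadratic part
    have hB : (∑ l : Fin L, ∑ k : Fin K,
          ((α l k : ℝ) : ℂ) * Matrix.trace ((Λ l k)ᴴ * (P l) * (Λ l k))) =
        ∑ l : Fin L, ∑ k : Fin K, star (φ l k) ⬝ᵥ ((Q l k) *ᵥ (φ l k)) := by
      simp only [hL1, hR1]
      exact sum_swap6' (fun a b c d e x =>
        ∑ m : Fin M', ∑ n : Fin M', ∑ p : Fin M',
          ((α a b : ℝ) : ℂ) * ((β a c d : ℝ) : ℂ) * conj ((Λ a b) (e, m) p) *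
            (φ c d e) * conj (φ c d x) * (R a c d) m n * (Λ a b) (x, n) p)
    -- trace decomposition
    have hUtr : ∀ (l : Fin L) (k : Fin K),
        Matrix.trace ((Λ l k)ᴴ * (U φ l) * (Λ l k)) =
          (σ2 : ℂ) * Matrix.trace ((Λ l k)ᴴ * (Λ l k)) +
            Matrix.trace ((Λ l k)ᴴ * (P l) * (Λ l k)) := by
      intro l k
      rw [hUP l]
      simp [Matrix.mul_add, Matrix.add_mul, Matrix.smul_mul, Matrix.mul_smul, smul_eq_mul,
        Matrix.one_mul, Matrix.mul_one]
    rw [hf, hg]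
    have expand : ∀ (l : Fin L) (k : Fin K),
        α l k * (2 * (Matrix.trace ((W φ l k) * (Λ l k))).re -
            (Matrix.trace ((Λ l k)ᴴ * (U φ l) * (Λ l k))).re) =
          2 * (star (φ l k) ⬝ᵥ (v l k)).re -
            ((((α l k : ℝ) : ℂ) * Matrix.trace ((Λ l k)ᴴ * (P l) * (Λ l k))).re +
              σ2 * (α l k * (Matrix.trace ((Λ l k)ᴴ * (Λ l k))).re)) := by
      intro l k
      have h1 : α l k * (Matrix.trace ((W φ l k) * (Λ l k))).re =
          (star (φ l k) ⬝ᵥ (v l k)).re := by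
        rw [← Complex.re_ofReal_mul, hA]
      rw [hUtr l k]
      simp only [Complex.add_re, Complex.re_ofReal_mul]
      rw [← h1]
      ring_nf
    have hBre : (∑ l : Fin L, ∑ k : Fin K,
          ((((α l k : ℝ) : ℂ) * Matrix.trace ((Λ l k)ᴴ * (P l) * (Λ l k))).re)) =
        ∑ l : Fin L, ∑ k : Fin K, (star (φ l k) ⬝ᵥ ((Q l k) *ᵥ (φ l k))).re := by
      have := congrArg Complex.re hB
      simpa [Complex.re_sum] using this
    simp only [expand]
    simp only [Finset.sum_sub_distrib, Finset.sum_add_distrib, ← Finset.mul_sum]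
    rw [hBre]
    ring
  intro φ φ'
  rw [key φ, key φ']
  ring
end

section
/- Let τ and n be positive naturals, σ² > 0 a real number, c : Fin n → ℝ with c s ≥ 0 for all s, and v : Fin n → (Fin τ → ℂ) a family of pairwise orthogonal vectors with star (v s) ⬝ᵥ (v t) = 0 for s ≠ t and star (v s) ⬝ᵥ (v s) = (τ : ℂ) for all s. Let D : Matrix (Fin τ) (Fin τ) ℂ be defined by D s' t' = σ² * (if s' = t' then 1 else 0) + Σ_{s : Fin n} (c s : ℂ) * (v s s') * conj (v s t'). Then D is invertible, and for every t : Fin n, D⁻¹ *ᵥ (v t) = ((σ² + τ * c t : ℂ)⁻¹) • (v t). -/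
open Matrix ComplexConjugate
open scoped ComplexOrder

lemma psd_smul_real {m : Type*} [Fintype m] {A : Matrix m m ℂ} (hA : A.PosSemidef)
    {r : ℝ} (hr : 0 ≤ r) : ((r : ℂ) • A).PosSemidef := by
  rw [Matrix.posSemidef_iff_dotProduct_mulVec]
  constructor
  · unfold Matrix.IsHermitian
    rw [conjTranspose_smul, hA.isHermitian.eq]
    congr 1
    simp [Complex.conj_ofReal]
  · intro x
    rw [smul_mulVec, dotProduct_smul, smul_eq_mul]
    exact mul_nonneg (by exact_mod_cast Complex.zero_le_real.mpr hr) (hA.dotProduct_mulVec_nonneg x)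

lemma psd_sum {ι m : Type*} [Fintype m] (s : Finset ι) (f : ι → Matrix m m ℂ)
    (h : ∀ i ∈ s, (f i).PosSemidef) : (∑ i ∈ s, f i).PosSemidef := by
  classical
  induction s using Finset.induction_on with
  | empty => simpa using Matrix.PosSemidef.zero
  | insert _ _ hx ih =>
    rw [Finset.sum_insert hx]
    exact (h _ (Finset.mem_insert_self _ _)).add
      (ih fun i hi => h i (Finset.mem_insert_of_mem hi))

/-- Closed-form resolvent for covariance matrices built from scaled-orthogonal
pilots: if `D = σ² I + Σ_s c_s v_s v_sᴴ` with `c_s ≥ 0`, `vₛᴴ vₜ = 0` for `s ≠ t`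
and `‖vₛ‖² = τ`, then `D` is invertible and `D⁻¹ vₜ = vₜ / (σ² + τ cₜ)`. -/
theorem orthogonal_pilot_resolvent (τ n : ℕ) (hτ : 0 < τ) (hn : 0 < n)
    (σ2 : ℝ) (hσ2 : 0 < σ2)
    (c : Fin n → ℝ) (hc : ∀ s, 0 ≤ c s)
    (v : Fin n → (Fin τ → ℂ))
    (horth : ∀ s t, s ≠ t → star (v s) ⬝ᵥ (v t) = 0)
    (hnorm : ∀ s, star (v s) ⬝ᵥ (v s) = (τ : ℂ))
    (D : Matrix (Fin τ) (Fin τ) ℂ)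
    (hD : ∀ s' t', D s' t' = (σ2 : ℂ) * (if s' = t' then 1 else 0) +
      ∑ s : Fin n, (c s : ℂ) * (v s s') * conj (v s t')) :
    IsUnit D ∧
    ∀ t : Fin n, D⁻¹ *ᵥ (v t) = (((σ2 + (τ : ℝ) * c t : ℝ) : ℂ)⁻¹) • (v t) := by
  -- D applied to v t
  have hDv : ∀ t : Fin n, D *ᵥ (v t) = (((σ2 + (τ : ℝ) * c t : ℝ) : ℂ)) • (v t) := by
    intro t
    funext s'
    have hmv : (D *ᵥ v t) s' = ∑ t', D s' t' * v t t' := rfl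
    rw [hmv]
    have step : ∀ t', D s' t' * v t t' =
        (σ2 : ℂ) * (if s' = t' then 1 else 0) * v t t' +
        ∑ s : Fin n, (c s : ℂ) * (v s s') * (conj (v s t') * v t t') := by
      intro t'
      rw [hD, add_mul, Finset.sum_mul]
      congr 1
      exact Finset.sum_congr rfl fun s _ => by ring
    simp only [step]
    rw [Finset.sum_add_distrib, Finset.sum_comm]
    have h1 : ∑ t', (σ2 : ℂ) * (if s' = t' then 1 else 0) * v t t' = (σ2 : ℂ) * v t s' := by
      simp [mul_ite, Finset.sum_ite_eq]
    have h2 : ∀ s : Fin n, ∑ t', (c s : ℂ) * (v s s') * (conj (v s t') * v t t')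
        = (c s : ℂ) * (v s s') * (star (v s) ⬝ᵥ v t) := by
      intro s
      rw [← Finset.mul_sum]
      rfl
    rw [h1]
    have h3 : ∑ s : Fin n, ∑ t', (c s : ℂ) * (v s s') * (conj (v s t') * v t t')
        = (c t : ℂ) * (v t s') * (τ : ℂ) := by
      rw [Finset.sum_congr rfl (fun s _ => h2 s)]
      rw [Finset.sum_eq_single t]
      · rw [hnorm]
      · intro s _ hs
        rw [horth s t hs, mul_zero]
      · intro h; exact absurd (Finset.mem_univ t) h
    rw [h3]
    simp only [Pi.smul_apply, smul_eq_mul, Complex.ofReal_add, Complex.ofReal_mul,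
      Complex.ofReal_natCast]
    ring
  have hμ : ∀ t : Fin n, ((σ2 + (τ : ℝ) * c t : ℝ) : ℂ) ≠ 0 := by
    intro t
    have h : (0:ℝ) < σ2 + (τ : ℝ) * c t :=
      add_pos_of_pos_of_nonneg hσ2 (mul_nonneg (Nat.cast_nonneg _) (hc t))
    exact Complex.ofReal_ne_zero.mpr h.ne'
  -- decomposition of D
  have hDeq : D = Matrix.diagonal (fun _ : Fin τ => (σ2 : ℂ)) +
      ∑ s : Fin n, (c s : ℂ) • Matrix.vecMulVec (v s) (star (v s)) := by
    ext s' t'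
    rw [hD]
    simp only [Matrix.add_apply, Matrix.diagonal_apply, Matrix.sum_apply,
      Matrix.smul_apply, Matrix.vecMulVec_apply, Pi.star_apply, smul_eq_mul]
    congr 1
    · by_cases h : s' = t' <;> simp [h]
    · apply Finset.sum_congr rfl
      intro s _
      rw [RCLike.star_def]
      ring
  have hpd : D.PosDef := by
    rw [hDeq]
    apply Matrix.PosDef.add_posSemidef
    · exact Matrix.PosDef.diagonal fun _ => Complex.zero_lt_real.mpr hσ2
    · apply psd_sum
      intro s _
      apply psd_smul_real _ (hc s)
      have : Matrix.vecMulVec (v s) (star (v s)) =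
          (Matrix.replicateCol Unit (v s)) * (Matrix.replicateCol Unit (v s))ᴴ := by
        rw [Matrix.conjTranspose_replicateCol, Matrix.vecMulVec_eq Unit]
      rw [this]
      exact Matrix.posSemidef_self_mul_conjTranspose _
  refine ⟨hpd.isUnit, ?_⟩
  intro t
  have hinv := hpd.isUnit.invertible
  have hkey := congrArg (fun w => D⁻¹ *ᵥ w) (hDv t)
  simp only [Matrix.mulVec_smul] at hkey
  rw [Matrix.mulVec_mulVec, Matrix.inv_mul_of_invertible, Matrix.one_mulVec] at hkey
  calc D⁻¹ *ᵥ v t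
      = (((σ2 + (τ : ℝ) * c t : ℝ) : ℂ))⁻¹ • (((σ2 + (τ : ℝ) * c t : ℝ) : ℂ) • (D⁻¹ *ᵥ v t)) := by
        rw [smul_smul, inv_mul_cancel₀ (hμ t), one_smul]
    _ = (((σ2 + (τ : ℝ) * c t : ℝ) : ℂ))⁻¹ • (v t) := by rw [← hkey]
end

section
/- Assume β l i j ≥ 0 for all l, i, j and σ² > 0. Then for every pilot configuration φ and every pair (l, k), (β l l k) * Re (star (φ l k) ⬝ᵥ ((D l φ)⁻¹ *ᵥ (φ l k))) ≤ 1. Equivalently, for any number of antennas M ≥ 0, the minimum mean squared error expression M * (β l l k) − M * (β l l k)^2 * Re (star (φ l k) ⬝ᵥ ((D l φ)⁻¹ *ᵥ (φ l k))) is nonnegative. -/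
set_option maxHeartbeats 1000000
open Matrix ComplexConjugate
open scoped ComplexOrder

lemma quad_eq {τ L K : ℕ} (σ2 : ℝ) (β : Fin L → Fin K → ℝ) (v : Fin L → Fin K → Fin τ → ℂ)
    (A : Matrix (Fin τ) (Fin τ) ℂ)
    (hA : ∀ s t, A s t = (σ2:ℂ) * (if s = t then 1 else 0) +
      ∑ i, ∑ j, (β i j : ℂ) * v i j s * conj (v i j t)) (x : Fin τ → ℂ) :
    star x ⬝ᵥ (A *ᵥ x) = (σ2:ℂ) * ∑ s, (Complex.normSq (x s) : ℂ) +
      ∑ i, ∑ j, (β i j : ℂ) * (Complex.normSq (star x ⬝ᵥ v i j) : ℂ) := by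
  simp only [dotProduct, mulVec, hA, Pi.star_apply]
  simp only [mul_add, add_mul, Finset.mul_sum, Finset.sum_mul, Finset.sum_add_distrib,
    mul_ite, mul_one, mul_zero, ite_mul, zero_mul, Finset.sum_ite_eq, Finset.mem_univ, if_true]
  congr 1
  · refine Finset.sum_congr rfl fun s _ => ?_
    rw [Complex.normSq_eq_conj_mul_self]
    simp [Complex.star_def]; ring
  · have e1 : ∀ s : Fin τ, (∑ t : Fin τ, ∑ i : Fin L, ∑ j : Fin K,
        star (x s) * ((β i j : ℂ) * v i j s * conj (v i j t) * x t)) =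
        ∑ i : Fin L, ∑ j : Fin K, ∑ t : Fin τ,
        star (x s) * ((β i j : ℂ) * v i j s * conj (v i j t) * x t) := by
      intro s
      rw [Finset.sum_comm]
      exact Finset.sum_congr rfl fun i _ => Finset.sum_comm
    simp only [e1]
    rw [Finset.sum_comm]
    refine Finset.sum_congr rfl fun i _ => ?_
    rw [Finset.sum_comm]
    refine Finset.sum_congr rfl fun j _ => ?_
    rw [← Complex.mul_conj (∑ s, star (x s) * v i j s), map_sum, Finset.sum_mul_sum]
    rw [Finset.mul_sum]
    refine Finset.sum_congr rfl fun s _ => ?_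
    rw [Finset.mul_sum]
    refine Finset.sum_congr rfl fun t _ => ?_
    simp [Complex.star_def]
    ring

/-- Nonnegativity of the minimum mean squared error: with nonnegative fading and
positive noise, for every pilot configuration `φ` and every user `(l,k)`,
`β_{llk} Re(φ_{lk}ᴴ (D_l φ)⁻¹ φ_{lk}) ≤ 1`; equivalently, for every number of
antennas `M ≥ 0`, `M β_{llk} − M β_{llk}² φ_{lk}ᴴ D_l⁻¹ φ_{lk} ≥ 0`. -/
theorem mmse_nonneg (L K τ : ℕ) (hL : 0 < L) (hK : 0 < K) (hτ : 0 < τ)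
    (σ2 : ℝ) (hσ2 : 0 < σ2)
    (β : Fin L → Fin L → Fin K → ℝ) (hβ : ∀ l i j, 0 ≤ β l i j)
    (D : Fin L → (Fin L → Fin K → (Fin τ → ℂ)) → Matrix (Fin τ) (Fin τ) ℂ)
    (hD : ∀ l φ s t, D l φ s t =
      (σ2 : ℂ) * (if s = t then 1 else 0) +
        ∑ i : Fin L, ∑ j : Fin K, (β l i j : ℂ) * (φ i j s) * conj (φ i j t)) :
    ∀ (φ : Fin L → Fin K → (Fin τ → ℂ)) (l : Fin L) (k : Fin K),
      (β l l k) * (star (φ l k) ⬝ᵥ ((D l φ)⁻¹ *ᵥ (φ l k))).re ≤ 1 ∧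
      ∀ M : ℝ, 0 ≤ M →
        0 ≤ M * (β l l k) -
          M * (β l l k) ^ 2 * (star (φ l k) ⬝ᵥ ((D l φ)⁻¹ *ᵥ (φ l k))).re := by
  intro φ l k
  set A : Matrix (Fin τ) (Fin τ) ℂ := D l φ with hAdef
  have hA : ∀ s t, A s t = (σ2:ℂ) * (if s = t then 1 else 0) +
      ∑ i, ∑ j, ((β l) i j : ℂ) * φ i j s * conj (φ i j t) := hD l φ
  have quad := quad_eq σ2 (β l) φ A hA
  -- real version of the quadratic form
  have quadR : ∀ x : Fin τ → ℂ, star x ⬝ᵥ (A *ᵥ x) =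
      ((σ2 * ∑ s, Complex.normSq (x s) +
        ∑ i, ∑ j, β l i j * Complex.normSq (star x ⬝ᵥ φ i j) : ℝ) : ℂ) := by
    intro x; rw [quad x]; push_cast; ring
  have Qnonneg : ∀ x : Fin τ → ℂ,
      0 ≤ σ2 * ∑ s, Complex.normSq (x s) +
        ∑ i, ∑ j, β l i j * Complex.normSq (star x ⬝ᵥ φ i j) := by
    intro x
    have h1 : 0 ≤ σ2 * ∑ s, Complex.normSq (x s) :=
      mul_nonneg hσ2.le (Finset.sum_nonneg fun s _ => Complex.normSq_nonneg _)
    have h2 : 0 ≤ ∑ i, ∑ j, β l i j * Complex.normSq (star x ⬝ᵥ φ i j) :=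
      Finset.sum_nonneg fun i _ => Finset.sum_nonneg fun j _ =>
        mul_nonneg (hβ l i j) (Complex.normSq_nonneg _)
    linarith
  -- invertibility
  have hdet : A.det ≠ 0 := by
    intro h
    obtain ⟨x, hx0, hx⟩ := (Matrix.exists_mulVec_eq_zero_iff).2 h
    have h0 : star x ⬝ᵥ (A *ᵥ x) = 0 := by rw [hx, dotProduct_zero]
    rw [quadR x] at h0
    have h0' : σ2 * ∑ s, Complex.normSq (x s) +
        ∑ i, ∑ j, β l i j * Complex.normSq (star x ⬝ᵥ φ i j) = 0 := by
      exact_mod_cast h0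
    have hS : 0 < ∑ s, Complex.normSq (x s) := by
      obtain ⟨s, hs⟩ := Function.ne_iff.1 hx0
      exact Finset.sum_pos' (fun t _ => Complex.normSq_nonneg _)
        ⟨s, Finset.mem_univ s, by simpa [Complex.normSq_pos] using hs⟩
    have h2 : 0 ≤ ∑ i, ∑ j, β l i j * Complex.normSq (star x ⬝ᵥ φ i j) :=
      Finset.sum_nonneg fun i _ => Finset.sum_nonneg fun j _ =>
        mul_nonneg (hβ l i j) (Complex.normSq_nonneg _)
    nlinarith
  set x : Fin τ → ℂ := A⁻¹ *ᵥ φ l k with hxdef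
  have hAx : A *ᵥ x = φ l k := by
    rw [hxdef, Matrix.mulVec_mulVec, Matrix.mul_nonsing_inv A (isUnit_iff_ne_zero.mpr hdet), Matrix.one_mulVec]
  set Q : ℝ := σ2 * ∑ s, Complex.normSq (x s) +
      ∑ i, ∑ j, β l i j * Complex.normSq (star x ⬝ᵥ φ i j) with hQdef
  have hz : star (φ l k) ⬝ᵥ x = (Q : ℂ) := by
    have h' := quadR x
    rw [hAx, ← hQdef] at h'
    rw [Matrix.star_dotProduct, h']
    simp [Complex.star_def, Complex.conj_ofReal]
  have hre : (star (φ l k) ⬝ᵥ ((D l φ)⁻¹ *ᵥ (φ l k))).re = Q := by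
    rw [← hAdef, ← hxdef, hz, Complex.ofReal_re]
  -- the key inequality : β l l k * Q^2 ≤ Q
  have hkey : β l l k * Q ^ 2 ≤ Q := by
    have hterm : β l l k * Complex.normSq (star x ⬝ᵥ φ l k) ≤
        ∑ i, ∑ j, β l i j * Complex.normSq (star x ⬝ᵥ φ i j) := by
      have inner : β l l k * Complex.normSq (star x ⬝ᵥ φ l k) ≤
          ∑ j, β l l j * Complex.normSq (star x ⬝ᵥ φ l j) :=
        Finset.single_le_sum (f := fun j => β l l j * Complex.normSq (star x ⬝ᵥ φ l j))
          (fun j _ => mul_nonneg (hβ l l j) (Complex.normSq_nonneg _)) (Finset.mem_univ k)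
      refine inner.trans ?_
      exact Finset.single_le_sum
        (f := fun i => ∑ j, β l i j * Complex.normSq (star x ⬝ᵥ φ i j))
        (fun i _ => Finset.sum_nonneg fun j _ =>
          mul_nonneg (hβ l i j) (Complex.normSq_nonneg _)) (Finset.mem_univ l)
    have hns : Complex.normSq (star x ⬝ᵥ φ l k) = Q ^ 2 := by
      rw [Matrix.star_dotProduct, hz]
      simp [Complex.normSq_conj, Complex.normSq_ofReal, sq]
    have h1 : 0 ≤ σ2 * ∑ s, Complex.normSq (x s) :=
      mul_nonneg hσ2.le (Finset.sum_nonneg fun s _ => Complex.normSq_nonneg _)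
    rw [hns] at hterm
    linarith
  have hQ0 : 0 ≤ Q := Qnonneg x
  have hfirst : β l l k * (star (φ l k) ⬝ᵥ ((D l φ)⁻¹ *ᵥ (φ l k))).re ≤ 1 := by
    rw [hre]
    rcases hQ0.eq_or_lt with h | h
    · rw [← h]; simp
    · nlinarith
  refine ⟨hfirst, fun M hM => ?_⟩
  have h2 : 0 ≤ M * β l l k * (1 - β l l k * (star (φ l k) ⬝ᵥ ((D l φ)⁻¹ *ᵥ (φ l k))).re) :=
    mul_nonneg (mul_nonneg hM (hβ l l k)) (by linarith)
  nlinarith [h2]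
end

section
/- Assume σ² > 0, β l i j ≥ 0 and p l k > 0 for all indices, and let the pilots be orthogonal: φ l k = (Real.sqrt (p l k) : ℂ) • v (ψ l k). Fix (l, k) and suppose the pilot-contamination interference I = Σ_{(i,j) ≠ (l,k), ψ i j = ψ l k} (β l i j)^2 * (p i j) is strictly positive. For a positive natural M, define q = Re (star (φ l k) ⬝ᵥ ((D l)⁻¹ *ᵥ (φ l k))), S = (β l l k)^2 * q^2, and den M = (1 / M) * (Σ_{i,j} β l i j + σ²) * q + Σ_{i : Fin L} Σ_{j : Fin K} (β l i j)^2 * ‖star (φ i j) ⬝ᵥ ((D l)⁻¹ *ᵥ (φ l k))‖² − S, and R M = Real.logb 2 (1 + S / den M). Then, as M → ∞ (Filter.atTop on ℕ), R M tends to Real.logb 2 (1 + (β l l k)^2 * (p l k) / I). -/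
open Matrix ComplexConjugate
open scoped ComplexOrder

/-- Large-antenna limit of the achievable uplink rate under orthogonal pilots:
as the number of antennas `M → ∞`, the rate `R M = log₂(1 + S / den M)` of user
`(l,k)` tends to `log₂(1 + β_{llk}² p_{lk} / I)`, where `I` is the
pilot-contamination interference from users sharing the pilot of `(l,k)`. -/
theorem rate_large_antenna_limit (L K τ : ℕ) (hL : 0 < L) (hK : 0 < K) (hτ : 0 < τ)
    (σ2 : ℝ) (hσ2 : 0 < σ2)
    (β : Fin L → Fin L → Fin K → ℝ) (hβ : ∀ l i j, 0 ≤ β l i j)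
    (p : Fin L → Fin K → ℝ) (hp : ∀ l k, 0 < p l k)
    (v : Fin τ → (Fin τ → ℂ))
    (horth : ∀ s t, s ≠ t → star (v s) ⬝ᵥ (v t) = 0)
    (hnorm : ∀ s, star (v s) ⬝ᵥ (v s) = (τ : ℂ))
    (ψ : Fin L → Fin K → Fin τ)
    (φ : Fin L → Fin K → (Fin τ → ℂ))
    (hφ : ∀ i j, φ i j = ((Real.sqrt (p i j) : ℝ) : ℂ) • v (ψ i j))
    (D : Fin L → Matrix (Fin τ) (Fin τ) ℂ)
    (hD : ∀ l s t, D l s t = (σ2 : ℂ) * (if s = t then 1 else 0) +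
      ∑ i : Fin L, ∑ j : Fin K, (β l i j : ℂ) * (φ i j s) * conj (φ i j t))
    (l : Fin L) (k : Fin K)
    (I : ℝ)
    (hI_def : I = ∑ i : Fin L, ∑ j : Fin K,
      if (i, j) ≠ (l, k) ∧ ψ i j = ψ l k then (β l i j) ^ 2 * p i j else 0)
    (hI : 0 < I)
    (q : ℝ) (hq : q = (star (φ l k) ⬝ᵥ ((D l)⁻¹ *ᵥ (φ l k))).re)
    (S : ℝ) (hS : S = (β l l k) ^ 2 * q ^ 2)
    (den : ℕ → ℝ)
    (hden : ∀ M : ℕ, den M =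
      (1 / (M : ℝ)) * ((∑ i : Fin L, ∑ j : Fin K, β l i j) + σ2) * q +
        (∑ i : Fin L, ∑ j : Fin K,
          (β l i j) ^ 2 * ‖star (φ i j) ⬝ᵥ ((D l)⁻¹ *ᵥ (φ l k))‖ ^ 2) - S)
    (R : ℕ → ℝ)
    (hR : ∀ M : ℕ, R M = Real.logb 2 (1 + S / den M)) :
    Filter.Tendsto R Filter.atTop
      (nhds (Real.logb 2 (1 + (β l l k) ^ 2 * (p l k) / I))) := by
  classical
  -- basic dot product facts
  have hvv : ∀ s t, star (v s) ⬝ᵥ v t = if s = t then (τ : ℂ) else 0 := by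
    intro s t
    by_cases h : s = t
    · subst h; simp [hnorm]
    · simp [h, horth s t h]
  have hφdot : ∀ i j (x : Fin τ → ℂ),
      star (φ i j) ⬝ᵥ x = (Real.sqrt (p i j) : ℂ) * (star (v (ψ i j)) ⬝ᵥ x) := by
    intro i j x
    rw [hφ]
    simp [dotProduct, Finset.mul_sum, mul_assoc]
  have hφv : ∀ i j t, star (φ i j) ⬝ᵥ v t
      = (Real.sqrt (p i j) : ℂ) * (if ψ i j = t then (τ : ℂ) else 0) := by
    intro i j t; rw [hφdot, hvv]
  -- expansion of D l *ᵥ x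
  have hDmul : ∀ x : Fin τ → ℂ, D l *ᵥ x =
      fun s => (σ2 : ℂ) * x s +
        ∑ i : Fin L, ∑ j : Fin K, (β l i j : ℂ) * (star (φ i j) ⬝ᵥ x) * φ i j s := by
    intro x
    funext s
    show ∑ t, D l s t * x t = _
    simp only [hD, add_mul, Finset.sum_add_distrib, Finset.sum_mul]
    congr 1
    · simp [mul_ite, ite_mul, mul_assoc]
    · rw [Finset.sum_comm]
      refine Finset.sum_congr rfl fun i _ => ?_
      rw [Finset.sum_comm]
      refine Finset.sum_congr rfl fun j _ => ?_
      simp only [dotProduct, Pi.star_apply, RCLike.star_def, Finset.mul_sum, Finset.sum_mul]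
      refine Finset.sum_congr rfl fun t _ => ?_
      ring
  set t0 := ψ l k with ht0
  set c : ℝ := ∑ i : Fin L, ∑ j : Fin K, (if ψ i j = t0 then β l i j * p i j else 0) with hc_def
  have hc : 0 ≤ c := by
    refine Finset.sum_nonneg fun i _ => Finset.sum_nonneg fun j _ => ?_
    split
    · exact mul_nonneg (hβ l i j) (hp i j).le
    · exact le_rfl
  set lam : ℝ := σ2 + τ * c with hlam_def
  have hlam : 0 < lam := by
    have : (0:ℝ) ≤ τ * c := mul_nonneg (by positivity) hc
    linarith
  have heig : D l *ᵥ v t0 = ((lam : ℝ) : ℂ) • v t0 := by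
    rw [hDmul]
    funext s
    have hterm : ∀ i j, (β l i j : ℂ) * (star (φ i j) ⬝ᵥ v t0) * φ i j s
        = (if ψ i j = t0 then ((β l i j * p i j : ℝ) : ℂ) else 0) * ((τ : ℂ) * v t0 s) := by
      intro i j
      rw [hφv, hφ]
      by_cases h : ψ i j = t0
      · have hs : ((Real.sqrt (p i j) : ℝ) : ℂ) * ((Real.sqrt (p i j) : ℝ) : ℂ)
            = ((p i j : ℝ) : ℂ) := by
          rw [← Complex.ofReal_mul, Real.mul_self_sqrt (hp i j).le]
        rw [if_pos h, if_pos h, h]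
        simp only [Pi.smul_apply, smul_eq_mul]
        push_cast
        linear_combination ((β l i j : ℂ) * (τ : ℂ) * v t0 s) * hs
      · simp [h]
    simp only [hterm]
    simp only [← Finset.sum_mul]
    have hcc : (∑ i : Fin L, ∑ j : Fin K, (if ψ i j = t0 then ((β l i j * p i j : ℝ) : ℂ) else 0))
        = ((c : ℝ) : ℂ) := by
      rw [hc_def]
      push_cast [apply_ite (fun x : ℝ => (x : ℂ))]
      rfl
    rw [hcc]
    simp only [Pi.smul_apply, smul_eq_mul, hlam_def]
    push_cast
    ring
  -- quadratic form and injectivity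
  have hquad : ∀ x : Fin τ → ℂ, star x ⬝ᵥ (D l *ᵥ x) =
      (σ2 : ℂ) * (∑ s, (Complex.normSq (x s) : ℂ)) +
        ∑ i : Fin L, ∑ j : Fin K,
          (β l i j : ℂ) * (Complex.normSq (star (φ i j) ⬝ᵥ x) : ℂ) := by
    intro x
    have hdp : ∀ (u y : Fin τ → ℂ), star u ⬝ᵥ y = ∑ s, conj (u s) * y s := by
      intro u y; simp [dotProduct]
    rw [hDmul, hdp]
    simp only [mul_add, Finset.sum_add_distrib]
    congr 1
    · rw [Finset.mul_sum]
      refine Finset.sum_congr rfl fun s _ => ?_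
      rw [Complex.normSq_eq_conj_mul_self]
      ring
    · simp only [Finset.mul_sum]
      rw [Finset.sum_comm]
      refine Finset.sum_congr rfl fun i _ => ?_
      rw [Finset.sum_comm]
      refine Finset.sum_congr rfl fun j _ => ?_
      have hw : conj (star (φ i j) ⬝ᵥ x) = ∑ s, conj (x s) * φ i j s := by
        rw [hdp, map_sum]
        refine Finset.sum_congr rfl fun s _ => ?_
        rw [_root_.map_mul, Complex.conj_conj]
        ring
      calc ∑ s, conj (x s) * ((β l i j : ℂ) * (star (φ i j) ⬝ᵥ x) * φ i j s)
          = (β l i j : ℂ) * (star (φ i j) ⬝ᵥ x) * ∑ s, conj (x s) * φ i j s := by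
            rw [Finset.mul_sum]
            exact Finset.sum_congr rfl fun s _ => by ring
        _ = (β l i j : ℂ) * (star (φ i j) ⬝ᵥ x) * conj (star (φ i j) ⬝ᵥ x) := by rw [← hw]
        _ = (β l i j : ℂ) * (Complex.normSq (star (φ i j) ⬝ᵥ x) : ℂ) := by
            rw [Complex.normSq_eq_conj_mul_self]; ring
  have hker : ∀ x : Fin τ → ℂ, D l *ᵥ x = 0 → x = 0 := by
    intro x hx
    by_contra hxne
    have h0 : star x ⬝ᵥ (D l *ᵥ x) = 0 := by rw [hx]; simp
    rw [hquad] at h0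
    have h0' : ((σ2 * (∑ s, Complex.normSq (x s)) +
        ∑ i : Fin L, ∑ j : Fin K, β l i j * Complex.normSq (star (φ i j) ⬝ᵥ x) : ℝ) : ℂ)
        = 0 := by push_cast; exact h0
    have h0re : σ2 * (∑ s, Complex.normSq (x s)) +
        ∑ i : Fin L, ∑ j : Fin K, β l i j * Complex.normSq (star (φ i j) ⬝ᵥ x) = 0 := by
      exact_mod_cast h0'
    have hA : 0 < ∑ s, Complex.normSq (x s) := by
      have hA0 : 0 ≤ ∑ s, Complex.normSq (x s) :=
        Finset.sum_nonneg fun s _ => Complex.normSq_nonneg _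
      rcases hA0.lt_or_eq with h | h
      · exact h
      · exfalso
        apply hxne
        funext s
        have := (Finset.sum_eq_zero_iff_of_nonneg
          (fun s _ => Complex.normSq_nonneg (x s))).mp h.symm s (Finset.mem_univ s)
        exact Complex.normSq_eq_zero.mp this
    have hB : 0 ≤ ∑ i : Fin L, ∑ j : Fin K, β l i j * Complex.normSq (star (φ i j) ⬝ᵥ x) :=
      Finset.sum_nonneg fun i _ => Finset.sum_nonneg fun j _ =>
        mul_nonneg (hβ l i j) (Complex.normSq_nonneg _)
    have hpos : (0:ℝ) < σ2 * ∑ s, Complex.normSq (x s) := mul_pos hσ2 hA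
    nlinarith [h0re, hB, hpos]
  have hUnit : IsUnit (D l) := by
    rw [← Matrix.mulVec_injective_iff_isUnit]
    intro a b hab
    have h0 : D l *ᵥ (a - b) = 0 := by
      rw [Matrix.mulVec_sub, hab, sub_self]
    have := hker _ h0
    exact sub_eq_zero.mp this
  have hUdet : IsUnit (D l).det := (Matrix.isUnit_iff_isUnit_det _).mp hUnit
  -- the inverse acting on φ l k
  have hinv : (D l)⁻¹ *ᵥ φ l k = ((lam⁻¹ : ℝ) : ℂ) • φ l k := by
    have h1 : D l *ᵥ (((lam⁻¹ : ℝ) : ℂ) • φ l k) = φ l k := by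
      rw [Matrix.mulVec_smul, hφ l k, Matrix.mulVec_smul, ← ht0, heig, smul_smul, smul_smul]
      congr 1
      push_cast
      field_simp
    conv_lhs => rw [← h1]
    rw [Matrix.mulVec_mulVec, Matrix.nonsing_inv_mul _ hUdet, Matrix.one_mulVec]
  -- value of q
  have hφφ : star (φ l k) ⬝ᵥ φ l k = ((p l k * τ : ℝ) : ℂ) := by
    rw [hφdot l k (φ l k)]
    conv_lhs => rw [hφ l k]
    rw [dotProduct_smul, hvv, if_pos rfl, smul_eq_mul]
    have hss : ((Real.sqrt (p l k) : ℝ) : ℂ) * ((Real.sqrt (p l k) : ℝ) : ℂ)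
        = ((p l k : ℝ) : ℂ) := by
      rw [← Complex.ofReal_mul, Real.mul_self_sqrt (hp l k).le]
    push_cast
    push_cast at hss
    linear_combination (τ : ℂ) * hss
  have hqval : q = p l k * τ / lam := by
    rw [hq, hinv, dotProduct_smul, hφφ, smul_eq_mul, ← Complex.ofReal_mul,
      Complex.ofReal_re]
    field_simp
  have hnval : ∀ i j, ‖star (φ i j) ⬝ᵥ ((D l)⁻¹ *ᵥ φ l k)‖ ^ 2
      = if ψ i j = t0 then p i j * p l k * τ ^ 2 / lam ^ 2 else 0 := by
    intro i j
    rw [hinv, dotProduct_smul]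
    conv_lhs => rw [hφ l k]
    rw [dotProduct_smul, hφv i j, ← ht0]
    by_cases h : ψ i j = t0
    · rw [if_pos h, if_pos h]
      simp only [smul_eq_mul]
      rw [show ((lam⁻¹ : ℝ) : ℂ) * (((Real.sqrt (p l k) : ℝ) : ℂ) *
          (((Real.sqrt (p i j) : ℝ) : ℂ) * (τ : ℂ)))
          = ((lam⁻¹ * (Real.sqrt (p l k) * (Real.sqrt (p i j) * τ)) : ℝ) : ℂ) from by
        push_cast; ring]
      rw [Complex.norm_real, Real.norm_eq_abs, sq_abs]
      rw [mul_pow, mul_pow, mul_pow, Real.sq_sqrt (hp l k).le, Real.sq_sqrt (hp i j).le]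
      field_simp
    · rw [if_neg h, if_neg h]
      simp
  -- sum identity
  have hJ : (∑ i : Fin L, ∑ j : Fin K, if ψ i j = t0 then β l i j ^ 2 * p i j else 0)
      = I + β l l k ^ 2 * p l k := by
    have h2 : (∑ i : Fin L, ∑ j : Fin K,
        if (i, j) = (l, k) then β l l k ^ 2 * p l k else 0) = β l l k ^ 2 * p l k := by
      simp [Prod.mk.injEq, ite_and, Finset.sum_ite_eq']
    rw [hI_def, ← h2, ← Finset.sum_add_distrib]
    refine Finset.sum_congr rfl fun i _ => ?_
    rw [← Finset.sum_add_distrib]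
    refine Finset.sum_congr rfl fun j _ => ?_
    by_cases h1 : (i, j) = (l, k)
    · obtain ⟨rfl, rfl⟩ := Prod.mk.injEq .. ▸ h1
      simp [ht0]
    · simp [h1]
  have hsum : (∑ i : Fin L, ∑ j : Fin K,
      β l i j ^ 2 * ‖star (φ i j) ⬝ᵥ ((D l)⁻¹ *ᵥ φ l k)‖ ^ 2)
      = p l k * τ ^ 2 / lam ^ 2 * (I + β l l k ^ 2 * p l k) := by
    rw [← hJ, Finset.mul_sum]
    refine Finset.sum_congr rfl fun i _ => ?_
    rw [Finset.mul_sum]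
    refine Finset.sum_congr rfl fun j _ => ?_
    rw [hnval]
    by_cases h : ψ i j = t0 <;> simp [h] <;> ring
  have hden' : ∀ M : ℕ, den M =
      (1 / (M : ℝ)) * ((∑ i : Fin L, ∑ j : Fin K, β l i j) + σ2) * q +
        p l k * τ ^ 2 / lam ^ 2 * I := by
    intro M
    rw [hden M, hsum, hS, hqval]
    field_simp
    ring
  -- the limit
  set A := β l l k ^ 2 * p l k / I with hA_def
  set E := p l k * τ ^ 2 / lam ^ 2 * I with hE_def
  have hτR : (0:ℝ) < (τ : ℝ) := by exact_mod_cast hτ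
  have hE : 0 < E := by
    have : (0:ℝ) < p l k * τ ^ 2 / lam ^ 2 :=
      div_pos (mul_pos (hp l k) (pow_pos hτR 2)) (pow_pos hlam 2)
    exact mul_pos this hI
  have hden_lim : Filter.Tendsto den Filter.atTop (nhds E) := by
    have h1 : Filter.Tendsto
        (fun M : ℕ => (1 / (M : ℝ)) * ((((∑ i : Fin L, ∑ j : Fin K, β l i j) + σ2) * q)))
        Filter.atTop (nhds 0) := by
      simpa using
        tendsto_one_div_atTop_nhds_zero_nat.mul_const
          (((∑ i : Fin L, ∑ j : Fin K, β l i j) + σ2) * q)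
    have h2 := h1.add_const E
    rw [zero_add] at h2
    refine h2.congr fun M => ?_
    rw [hden' M]
    ring
  have hfrac : Filter.Tendsto (fun M => S / den M) Filter.atTop (nhds (S / E)) :=
    Filter.Tendsto.div tendsto_const_nhds hden_lim hE.ne'
  have hSE : S / E = A := by
    have hX : (0:ℝ) < p l k * (τ:ℝ) ^ 2 / lam ^ 2 :=
      div_pos (mul_pos (hp l k) (pow_pos hτR 2)) (pow_pos hlam 2)
    have key : S = β l l k ^ 2 * p l k * (p l k * (τ:ℝ) ^ 2 / lam ^ 2) := by
      rw [hS, hqval, div_pow, mul_pow]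
      ring
    rw [key, hE_def, hA_def, mul_comm (p l k * (τ:ℝ) ^ 2 / lam ^ 2) I,
      mul_div_mul_right _ _ hX.ne']
  have hA0 : 0 ≤ A := div_nonneg (mul_nonneg (sq_nonneg _) (hp l k).le) hI.le
  have h1A : (0:ℝ) < 1 + A := by linarith
  have hlog : Filter.Tendsto (fun M => Real.logb 2 (1 + S / den M)) Filter.atTop
      (nhds (Real.logb 2 (1 + A))) := by
    have hcont : ContinuousAt (Real.logb 2) (1 + A) := Real.continuousAt_logb h1A.ne'
    exact hcont.tendsto.comp (by simpa [hSE] using hfrac.const_add 1)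
  exact hlog.congr fun M => (hR M).symm
end
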